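/- arXiv:2504.17063 — 2 statements merged into one kernel-verified Lean document; each statement's English description precedes it below -/
import Mathlib

section
/- Let U ⊆ ℝ^n be open, let H : U → ℝ and d : U → ℝ^k be twice continuously differentiable, assume the Jacobian d'(x) ∈ ℝ^{k×n} has full row rank k for all x ∈ U, and that {x ∈ U : d(x) = 0} is nonempty. Define L := {(x, ∇H(x) + d'(x)ᵀλ) : x ∈ U, d(x) = 0, λ ∈ ℝ^k} ⊆ ℝ^n × ℝ^n. Then for every z = (z₁,z₂) ∈ L, setting ẑ := (d'(z₁) d'(z₁)ᵀ)⁻¹ d'(z₁)(∇H(z₁) − z₂) ∈ ℝ^k and M(z) := ∇²H(z₁) − Σ_{l=1}^k ẑ_l ∇²d_l(z₁) ∈ ℝ^{n×n} (where ∇²H and ∇²d_l denote Hessians), the tangent space of L at z equals T_z L = {(v₁,v₂) ∈ ℝ^n × ℝ^n : d'(z₁) v₁ = 0 and v₂ − M(z) v₁ ∈ (ker d'(z₁))^⊥}. -/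
open Matrix

/-- The gradient of `H : ℝ^n → ℝ`, given componentwise by the partial derivatives. -/
noncomputable def grad {n : ℕ} (H : (Fin n → ℝ) → ℝ) (x : Fin n → ℝ) : Fin n → ℝ :=
  fun i => fderiv ℝ H x (Pi.single i 1)

/-- The Jacobian matrix of `d : ℝ^n → ℝ^k`. -/
noncomputable def jac {n k : ℕ} (d : (Fin n → ℝ) → (Fin k → ℝ)) (x : Fin n → ℝ) :
    Matrix (Fin k) (Fin n) ℝ :=
  Matrix.of fun j i => fderiv ℝ d x (Pi.single i 1) j

/-- The Hessian matrix of `H : ℝ^n → ℝ`. -/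
noncomputable def hess {n : ℕ} (H : (Fin n → ℝ) → ℝ) (x : Fin n → ℝ) :
    Matrix (Fin n) (Fin n) ℝ :=
  Matrix.of fun i j =>
    fderiv ℝ (fun y => fderiv ℝ H y (Pi.single j 1)) x (Pi.single i 1)

/-- The tangent space of a set `S` at `z`: all velocities at `0` of continuously
differentiable curves `(−1,1) → S` passing through `z` at time `0`. -/
def TangentSet {V : Type*} [NormedAddCommGroup V] [NormedSpace ℝ V]
    (S : Set V) (z : V) : Set V :=
  {v | ∃ x : ℝ → V, ContDiffOn ℝ 1 x (Set.Ioo (-1 : ℝ) 1) ∧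
    (∀ t ∈ Set.Ioo (-1 : ℝ) 1, x t ∈ S) ∧ x 0 = z ∧
    derivWithin x (Set.Ioo (-1 : ℝ) 1) 0 = v}

/-- The Lagrange multiplier `ẑ = (d'(z₁)d'(z₁)ᵀ)⁻¹ d'(z₁)(∇H(z₁) − z₂)` associated with a
point `z = (z₁,z₂)`. -/
noncomputable def zhat {n k : ℕ} (H : (Fin n → ℝ) → ℝ) (d : (Fin n → ℝ) → (Fin k → ℝ))
    (z : (Fin n → ℝ) × (Fin n → ℝ)) : Fin k → ℝ :=
  (jac d z.1 * (jac d z.1)ᵀ)⁻¹ *ᵥ (jac d z.1 *ᵥ (grad H z.1 - z.2))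

/-- The symmetric matrix `M(z) = ∇²H(z₁) − Σ_l ẑ_l ∇²d_l(z₁)`. -/
noncomputable def Mmat {n k : ℕ} (H : (Fin n → ℝ) → ℝ) (d : (Fin n → ℝ) → (Fin k → ℝ))
    (z : (Fin n → ℝ) × (Fin n → ℝ)) : Matrix (Fin n) (Fin n) ℝ :=
  hess H z.1 - ∑ l : Fin k, zhat H d z l • hess (fun y => d y l) z.1

/-- decomposition of a vector into basis -/
lemma pi_single_decomp {n : ℕ} (w : Fin n → ℝ) :
    w = ∑ i, w i • ((Pi.single i 1 : Fin n → ℝ)) := by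
  funext j
  rw [Finset.sum_apply]
  simp [Pi.single_apply]

lemma clm_pi_decomp {n : ℕ} {F : Type*} [NormedAddCommGroup F] [NormedSpace ℝ F]
    (φ : (Fin n → ℝ) →L[ℝ] F) (w : Fin n → ℝ) :
    φ w = ∑ i, w i • φ (Pi.single i 1) := by
  conv_lhs => rw [pi_single_decomp w]
  rw [map_sum]
  simp

lemma lin_pi_decomp {n : ℕ} {F : Type*} [AddCommGroup F] [Module ℝ F]
    (φ : (Fin n → ℝ) →ₗ[ℝ] F) (w : Fin n → ℝ) :
    φ w = ∑ i, w i • φ (Pi.single i 1) := by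
  conv_lhs => rw [pi_single_decomp w]
  rw [map_sum]
  simp

lemma clm_apply_eq_mulVec {n k : ℕ} (φ : (Fin n → ℝ) →L[ℝ] (Fin k → ℝ)) (w : Fin n → ℝ) :
    φ w = (Matrix.of fun j i => φ (Pi.single i 1) j) *ᵥ w := by
  rw [clm_pi_decomp]
  funext j
  rw [Finset.sum_apply]
  simp [Matrix.mulVec, dotProduct, mul_comm]

lemma isUnit_AAT {n k : ℕ} (A : Matrix (Fin k) (Fin n) ℝ) (h : A.rank = k) :
    IsUnit (A * Aᵀ) := by
  have h2 : (A * Aᵀ).rank = k := by rw [Matrix.rank_self_mul_transpose, h]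
  rw [← Matrix.mulVec_surjective_iff_isUnit]
  have ht : LinearMap.range (A * Aᵀ).mulVecLin = ⊤ := by
    apply Submodule.eq_top_of_finrank_eq
    rw [← Matrix.rank, h2, Module.finrank_pi]
    simp
  have hs : Function.Surjective (A * Aᵀ).mulVecLin := LinearMap.range_eq_top.mp ht
  exact hs

lemma inv_mulVec_cancel {k : ℕ} (B : Matrix (Fin k) (Fin k) ℝ) (hB : IsUnit B)
    (lam : Fin k → ℝ) : B⁻¹ *ᵥ (B *ᵥ lam) = lam := by
  rw [Matrix.mulVec_mulVec, Matrix.nonsing_inv_mul B ((Matrix.isUnit_iff_isUnit_det B).mp hB),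
    Matrix.one_mulVec]

lemma transpose_inv_recover {n k : ℕ} (A : Matrix (Fin k) (Fin n) ℝ) (hA : IsUnit (A * Aᵀ))
    (lam : Fin k → ℝ) :
    Aᵀ *ᵥ ((A * Aᵀ)⁻¹ *ᵥ (A *ᵥ (Aᵀ *ᵥ lam))) = Aᵀ *ᵥ lam := by
  rw [Matrix.mulVec_mulVec lam A Aᵀ, inv_mulVec_cancel _ hA]

lemma exists_transpose_mul_of_orth {n k : ℕ} (A : Matrix (Fin k) (Fin n) ℝ)
    (hA : IsUnit (A * Aᵀ)) (w : Fin n → ℝ)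
    (hw : ∀ u, A *ᵥ u = 0 → w ⬝ᵥ u = 0) :
    w = Aᵀ *ᵥ ((A * Aᵀ)⁻¹ *ᵥ (A *ᵥ w)) := by
  set u := w - Aᵀ *ᵥ ((A * Aᵀ)⁻¹ *ᵥ (A *ᵥ w)) with hu
  have hAu : A *ᵥ u = 0 := by
    rw [hu, Matrix.mulVec_sub, Matrix.mulVec_mulVec, Matrix.mulVec_mulVec,
      Matrix.mul_nonsing_inv _ ((Matrix.isUnit_iff_isUnit_det _).mp hA),
      Matrix.mulVec_mulVec, Matrix.one_mul, sub_self]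
  have h1 : w ⬝ᵥ u = 0 := hw u hAu
  have h2 : (Aᵀ *ᵥ ((A * Aᵀ)⁻¹ *ᵥ (A *ᵥ w))) ⬝ᵥ u = 0 := by
    rw [dotProduct_comm, Matrix.dotProduct_mulVec, Matrix.vecMul_transpose, hAu,
      zero_dotProduct]
  have h3 : u ⬝ᵥ u = 0 := by
    rw [hu, sub_dotProduct]
    rw [← hu, h1, h2, sub_self]
  have h4 : u = 0 := dotProduct_self_eq_zero.mp h3
  have h5 := sub_eq_zero.mp (hu ▸ h4)
  exact h5

lemma fderiv_eq_mulVec {n k : ℕ} (d : (Fin n → ℝ) → (Fin k → ℝ)) (x w : Fin n → ℝ) :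
    fderiv ℝ d x w = jac d x *ᵥ w :=
  clm_apply_eq_mulVec _ w

lemma fderiv_eq_grad {n : ℕ} (H : (Fin n → ℝ) → ℝ) (x w : Fin n → ℝ) :
    fderiv ℝ H x w = grad H x ⬝ᵥ w := by
  rw [clm_pi_decomp (fderiv ℝ H x) w]
  simp [dotProduct, grad, mul_comm]

lemma contDiffOn_grad {n : ℕ} {U : Set (Fin n → ℝ)} (hU : IsOpen U)
    {H : (Fin n → ℝ) → ℝ} (hH : ContDiffOn ℝ 2 H U) :
    ContDiffOn ℝ 1 (grad H) U := by
  have h1 : ContDiffOn ℝ 1 (fderiv ℝ H) U := hH.fderiv_of_isOpen hU (by norm_num)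
  rw [contDiffOn_pi]
  intro i
  exact h1.clm_apply contDiffOn_const

lemma contDiffOn_fderiv_apply {n k : ℕ} {U : Set (Fin n → ℝ)} (hU : IsOpen U)
    {d : (Fin n → ℝ) → (Fin k → ℝ)} (hd : ContDiffOn ℝ 2 d U) (l : Fin k) (i : Fin n) :
    ContDiffOn ℝ 1 (fun x => jac d x l i) U := by
  have h1 : ContDiffOn ℝ 1 (fderiv ℝ d) U := hd.fderiv_of_isOpen hU (by norm_num)
  have h2 : ContDiffOn ℝ 1 (fun x => fderiv ℝ d x (Pi.single i 1)) U :=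
    h1.clm_apply contDiffOn_const
  exact (contDiffOn_pi.mp h2) l

lemma hess_symm_of_contDiffOn {n : ℕ} {U : Set (Fin n → ℝ)} (hU : IsOpen U)
    {H : (Fin n → ℝ) → ℝ} (hH : ContDiffOn ℝ 2 H U) {x : Fin n → ℝ} (hx : x ∈ U)
    (i j : Fin n) : hess H x i j = hess H x j i := by
  have hca : ContDiffAt ℝ 2 H x := hH.contDiffAt (hU.mem_nhds hx)
  have hs : IsSymmSndFDerivAt ℝ H x := hca.isSymmSndFDerivAt (by simp)
  have h1 : ContDiffOn ℝ 1 (fderiv ℝ H) U := hH.fderiv_of_isOpen hU (by norm_num)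
  have hdiff : DifferentiableAt ℝ (fderiv ℝ H) x :=
    (h1.contDiffAt (hU.mem_nhds hx)).differentiableAt one_ne_zero
  have key : ∀ a b : Fin n,
      fderiv ℝ (fun y => fderiv ℝ H y (Pi.single b 1)) x (Pi.single a 1)
        = (fderiv ℝ (fderiv ℝ H) x (Pi.single a 1)) (Pi.single b 1) := by
    intro a b
    have := ((ContinuousLinearMap.apply ℝ ℝ ((Pi.single b 1 : Fin n → ℝ))).hasFDerivAt.comp
      x hdiff.hasFDerivAt).fderiv
    have heq : (fun y => fderiv ℝ H y (Pi.single b 1)) =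
        (ContinuousLinearMap.apply ℝ ℝ ((Pi.single b 1 : Fin n → ℝ))) ∘ (fderiv ℝ H) := rfl
    rw [heq, this]
    rfl
  show fderiv ℝ (fun y => fderiv ℝ H y (Pi.single j 1)) x (Pi.single i 1)
      = fderiv ℝ (fun y => fderiv ℝ H y (Pi.single i 1)) x (Pi.single j 1)
  rw [key, key, hs]

lemma differentiableAt_det_of_entries {k : ℕ} {M : ℝ → Matrix (Fin k) (Fin k) ℝ} {t₀ : ℝ}
    (hM : ∀ i j, DifferentiableAt ℝ (fun t => M t i j) t₀) :
    DifferentiableAt ℝ (fun t => (M t).det) t₀ := by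
  have h : (fun t => (M t).det)
      = fun t => ∑ σ : Equiv.Perm (Fin k),
          ((Equiv.Perm.sign σ : ℤ) : ℝ) * ∏ i, M t (σ i) i := by
    funext t
    rw [Matrix.det_apply']
  rw [h]
  apply DifferentiableAt.fun_sum
  intro σ _
  exact ((DifferentiableAt.fun_finsetProd (fun i _ => hM (σ i) i))).const_mul _

lemma differentiableAt_adjugate_of_entries {k : ℕ} {M : ℝ → Matrix (Fin k) (Fin k) ℝ} {t₀ : ℝ}
    (hM : ∀ i j, DifferentiableAt ℝ (fun t => M t i j) t₀) (i j : Fin k) :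
    DifferentiableAt ℝ (fun t => (M t).adjugate i j) t₀ := by
  have h : (fun t => (M t).adjugate i j)
      = fun t => ((M t).updateRow j (Pi.single i 1)).det := by
    funext t; rw [Matrix.adjugate_apply]
  rw [h]
  apply differentiableAt_det_of_entries
  intro a b
  by_cases hab : a = j
  · simp only [hab, Matrix.updateRow_self]
    exact differentiableAt_const _
  · simp only [Matrix.updateRow_apply, hab, if_false]
    exact hM a b

lemma differentiableAt_inv_of_entries {k : ℕ} {M : ℝ → Matrix (Fin k) (Fin k) ℝ} {t₀ : ℝ}
    (hM : ∀ i j, DifferentiableAt ℝ (fun t => M t i j) t₀)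
    (hu : IsUnit (M t₀)) (i j : Fin k) :
    DifferentiableAt ℝ (fun t => (M t)⁻¹ i j) t₀ := by
  have h : (fun t => (M t)⁻¹ i j) = fun t => ((M t).det)⁻¹ * (M t).adjugate i j := by
    funext t
    rw [Matrix.inv_def, Matrix.smul_apply, Ring.inverse_eq_inv', smul_eq_mul]
  rw [h]
  have hdet : DifferentiableAt ℝ (fun t => (M t).det) t₀ := differentiableAt_det_of_entries hM
  have hne : (M t₀).det ≠ 0 := by
    have := (Matrix.isUnit_iff_isUnit_det _).mp hu
    exact IsUnit.ne_zero this
  exact (hdet.inv hne).mul (differentiableAt_adjugate_of_entries hM i j)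

lemma hasDerivAt_pi_iff {ι : Type*} [Fintype ι] {f : ℝ → (ι → ℝ)} {f' : ι → ℝ} {x : ℝ} :
    HasDerivAt f f' x ↔ ∀ i, HasDerivAt (fun t => f t i) (f' i) x := by
  constructor
  · intro h i
    exact (ContinuousLinearMap.proj (R := ℝ) (φ := fun _ : ι => ℝ) i).hasFDerivAt.comp_hasDerivAt
      x h
  · intro h
    exact hasDerivAt_pi.mpr h

lemma hasDerivAt_comp_curve {n : ℕ} {U : Set (Fin n → ℝ)} (hU : IsOpen U)
    {F : (Fin n → ℝ) → ℝ} (hF : ContDiffOn ℝ 1 F U) {c : ℝ → (Fin n → ℝ)} {v1 : Fin n → ℝ}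
    (hc : HasDerivAt c v1 0) (hcU : c 0 ∈ U) :
    HasDerivAt (fun t => F (c t)) (∑ j, v1 j * fderiv ℝ F (c 0) (Pi.single j 1)) 0 := by
  have hdiff : DifferentiableAt ℝ F (c 0) :=
    (hF.contDiffAt (hU.mem_nhds hcU)).differentiableAt one_ne_zero
  have h := hdiff.hasFDerivAt.comp_hasDerivAt 0 hc
  refine h.congr_deriv ?_
  rw [clm_pi_decomp (fderiv ℝ F (c 0)) v1]
  simp

lemma fderiv_pi_proj {n k : ℕ} {d : (Fin n → ℝ) → (Fin k → ℝ)} {y : Fin n → ℝ}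
    (hdiff : DifferentiableAt ℝ d y) (l : Fin k) :
    fderiv ℝ (fun y' => d y' l) y
      = (ContinuousLinearMap.proj (R := ℝ) (φ := fun _ : Fin k => ℝ) l).comp (fderiv ℝ d y) :=
  ((ContinuousLinearMap.proj (R := ℝ) (φ := fun _ : Fin k => ℝ) l).hasFDerivAt.comp
    y hdiff.hasFDerivAt).fderiv

lemma fderiv_jac_entry_eq_hess {n k : ℕ} {U : Set (Fin n → ℝ)} (hU : IsOpen U)
    {d : (Fin n → ℝ) → (Fin k → ℝ)} (hd : ContDiffOn ℝ 2 d U) {x : Fin n → ℝ} (hx : x ∈ U)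
    (l : Fin k) (i j : Fin n) :
    fderiv ℝ (fun y => jac d y l i) x (Pi.single j 1) = hess (fun y => d y l) x j i := by
  have hEq : (fun y => jac d y l i)
      =ᶠ[nhds x] (fun y => fderiv ℝ (fun y' => d y' l) y (Pi.single i 1)) := by
    filter_upwards [hU.mem_nhds hx] with y hy
    have hdiff : DifferentiableAt ℝ d y :=
      (hd.contDiffAt (hU.mem_nhds hy)).differentiableAt (by norm_num)
    show fderiv ℝ d y (Pi.single i 1) l = _
    rw [fderiv_pi_proj hdiff l]
    rfl
  rw [hEq.fderiv_eq]
  rfl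


lemma mem_tangentSet_of_local {V : Type*} [NormedAddCommGroup V] [NormedSpace ℝ V]
    {S : Set V} {z v : V} (ε : ℝ) (hε : 0 < ε) (c : ℝ → V)
    (hc : ContDiffOn ℝ 1 c (Set.Ioo (-ε) ε))
    (hmem : ∀ t ∈ Set.Ioo (-ε) ε, c t ∈ S)
    (h0 : c 0 = z) (hd : HasDerivAt c v 0) :
    v ∈ TangentSet S z := by
  set φ : ℝ → ℝ := fun t => (ε * t) / Real.sqrt (ε^2 + t^2) with hφ
  have hsq : ∀ t : ℝ, (0:ℝ) < ε^2 + t^2 := fun t => by positivity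
  have hs : ∀ t : ℝ, 0 < Real.sqrt (ε^2 + t^2) := fun t => Real.sqrt_pos.mpr (hsq t)
  have hφmem : ∀ t : ℝ, φ t ∈ Set.Ioo (-ε) ε := by
    intro t
    have habs : |t| < Real.sqrt (ε^2 + t^2) := by
      rw [← Real.sqrt_sq_eq_abs]
      exact Real.sqrt_lt_sqrt (sq_nonneg t) (by nlinarith)
    have h1 : |φ t| < ε := by
      rw [hφ]
      rw [abs_div, abs_mul, abs_of_pos hε, abs_of_pos (hs t), div_lt_iff₀ (hs t)]
      calc ε * |t| < ε * Real.sqrt (ε^2 + t^2) := by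
            exact mul_lt_mul_of_pos_left habs hε
        _ = _ := by ring
    constructor
    · linarith [neg_abs_le (φ t), abs_nonneg (φ t), h1]
    · linarith [le_abs_self (φ t)]
  have hφ0 : φ 0 = 0 := by simp [hφ]
  have hφcd : ContDiff ℝ 1 φ := by
    rw [contDiff_iff_contDiffAt]
    intro t
    apply ContDiffAt.div
    · exact (contDiff_const.mul contDiff_id).contDiffAt
    · exact (Real.contDiffAt_sqrt (hsq t).ne').comp t
        ((contDiff_const.add (contDiff_id.pow 2)).contDiffAt)
    · exact (hs t).ne'
  have hφder : HasDerivAt φ 1 0 := by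
    have hnum : HasDerivAt (fun t : ℝ => ε * t) ε 0 := by
      simpa using (hasDerivAt_id (0:ℝ)).const_mul ε
    have hinner : HasDerivAt (fun t : ℝ => ε^2 + t^2) 0 0 := by
      have := ((hasDerivAt_pow 2 (0:ℝ)).const_add (ε^2))
      simpa using this
    have hden : HasDerivAt (fun t : ℝ => Real.sqrt (ε^2 + t^2)) 0 0 := by
      have h := (Real.hasDerivAt_sqrt (hsq 0).ne').comp 0 hinner
      simp at h
      exact h
    have h := hnum.div hden (hs 0).ne'
    refine h.congr_deriv ?_
    have h2 : Real.sqrt (ε^2 + 0^2) = ε := by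
      rw [show ε^2 + 0^2 = ε^2 by ring, Real.sqrt_sq hε.le]
    rw [h2]
    field_simp
    ring
  refine ⟨c ∘ φ, ?_, ?_, ?_, ?_⟩
  · apply hc.comp (hφcd.contDiffOn)
    intro t _
    exact hφmem t
  · intro t _
    exact hmem _ (hφmem t)
  · simp [Function.comp, hφ0, h0]
  · rw [derivWithin_of_isOpen isOpen_Ioo (by norm_num)]
    have := (hφ0 ▸ hd).scomp 0 hφder
    rw [this.deriv]
    simp

lemma forward_dir {n k : ℕ} {U : Set (Fin n → ℝ)} (hU : IsOpen U)
    {H : (Fin n → ℝ) → ℝ} {d : (Fin n → ℝ) → (Fin k → ℝ)}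
    (hH : ContDiffOn ℝ 2 H U) (hd : ContDiffOn ℝ 2 d U)
    (hrank : ∀ x ∈ U, (jac d x).rank = k)
    {L : Set ((Fin n → ℝ) × (Fin n → ℝ))}
    (hL : L = {p | ∃ (x : Fin n → ℝ) (lam : Fin k → ℝ),
      x ∈ U ∧ d x = 0 ∧ p = (x, grad H x + (jac d x)ᵀ *ᵥ lam)})
    {z v : (Fin n → ℝ) × (Fin n → ℝ)} (hv : v ∈ TangentSet L z) :
    jac d z.1 *ᵥ v.1 = 0 ∧ ∀ u, jac d z.1 *ᵥ u = 0 →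
      (v.2 - Mmat H d z *ᵥ v.1) ⬝ᵥ u = 0 := by
  obtain ⟨x, hxC, hxmem, hx0, hxd⟩ := hv
  have h0I : (0:ℝ) ∈ Set.Ioo (-1:ℝ) 1 := by constructor <;> norm_num
  have hInhds : Set.Ioo (-1:ℝ) 1 ∈ nhds (0:ℝ) := isOpen_Ioo.mem_nhds h0I
  have hxdiff : DifferentiableAt ℝ x 0 :=
    (hxC.differentiableOn one_ne_zero).differentiableAt hInhds
  have hxder : HasDerivAt x v 0 := by
    have h := hxdiff.hasDerivAt
    rwa [← derivWithin_of_isOpen isOpen_Ioo h0I, hxd] at h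
  set c1 : ℝ → (Fin n → ℝ) := fun t => (x t).1 with hc1def
  set c2 : ℝ → (Fin n → ℝ) := fun t => (x t).2 with hc2def
  have hc1der : HasDerivAt c1 v.1 0 := by
    have h := (ContinuousLinearMap.fst ℝ (Fin n → ℝ) (Fin n → ℝ)).hasFDerivAt.comp_hasDerivAt
      0 hxder
    exact h
  have hc2der : HasDerivAt c2 v.2 0 := by
    have h := (ContinuousLinearMap.snd ℝ (Fin n → ℝ) (Fin n → ℝ)).hasFDerivAt.comp_hasDerivAt
      0 hxder
    exact h
  have hc10 : c1 0 = z.1 := by show (x 0).1 = z.1; rw [hx0]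
  have hc20 : c2 0 = z.2 := by show (x 0).2 = z.2; rw [hx0]
  have hmemU : ∀ t ∈ Set.Ioo (-1:ℝ) 1, c1 t ∈ U ∧ d (c1 t) = 0 ∧
      ∃ lam, c2 t = grad H (c1 t) + (jac d (c1 t))ᵀ *ᵥ lam := by
    intro t ht
    have hmem := hxmem t ht
    rw [hL] at hmem
    obtain ⟨xt, lam, hxtU, hd0, heq⟩ := hmem
    have h1 : c1 t = xt := by show (x t).1 = xt; rw [heq]
    have h2 : c2 t = grad H xt + (jac d xt)ᵀ *ᵥ lam := by
      show (x t).2 = _; rw [heq]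
    exact ⟨by rw [h1]; exact hxtU, by rw [h1]; exact hd0, lam, by rw [h1, h2]⟩
  have hz1U : z.1 ∈ U := hc10 ▸ (hmemU 0 h0I).1
  have hc10U : c1 0 ∈ U := hc10 ▸ hz1U
  -- Claim 1
  have hdz : DifferentiableAt ℝ d z.1 :=
    (hd.contDiffAt (hU.mem_nhds hz1U)).differentiableAt (by norm_num)
  have hder1 : HasDerivAt (fun t => d (c1 t)) (jac d z.1 *ᵥ v.1) 0 := by
    have h := hdz.hasFDerivAt
    rw [← hc10] at h
    have h2 := h.comp_hasDerivAt 0 hc1der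
    rw [hc10] at h2
    have h3 : fderiv ℝ d z.1 v.1 = jac d z.1 *ᵥ v.1 := fderiv_eq_mulVec d z.1 v.1
    rw [h3] at h2
    exact h2
  have hder0 : HasDerivAt (fun t => d (c1 t)) 0 0 := by
    have hev : (fun t => d (c1 t)) =ᶠ[nhds 0] (fun _ => (0 : Fin k → ℝ)) := by
      filter_upwards [hInhds] with t ht
      exact (hmemU t ht).2.1
    exact (hasDerivAt_const 0 (0 : Fin k → ℝ)).congr_of_eventuallyEq hev
  have claim1 : jac d z.1 *ᵥ v.1 = 0 := hder1.unique hder0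
  refine ⟨claim1, ?_⟩
  set A : ℝ → Matrix (Fin k) (Fin n) ℝ := fun t => jac d (c1 t) with hA
  set g : ℝ → (Fin n → ℝ) := fun t => c2 t - grad H (c1 t) with hgdef
  set lamf : ℝ → (Fin k → ℝ) := fun t => ((A t * (A t)ᵀ)⁻¹) *ᵥ (A t *ᵥ g t) with hlamf
  have hunit : ∀ t ∈ Set.Ioo (-1:ℝ) 1, IsUnit (A t * (A t)ᵀ) :=
    fun t ht => isUnit_AAT _ (hrank _ (hmemU t ht).1)
  have hgid : ∀ t ∈ Set.Ioo (-1:ℝ) 1, g t = (A t)ᵀ *ᵥ lamf t := by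
    intro t ht
    obtain ⟨lam, hlam⟩ := (hmemU t ht).2.2
    have hgt : g t = (A t)ᵀ *ᵥ lam := by
      show c2 t - grad H (c1 t) = _
      rw [hlam]
      abel
    show g t = (A t)ᵀ *ᵥ (((A t * (A t)ᵀ)⁻¹) *ᵥ (A t *ᵥ g t))
    conv_lhs => rw [hgt]
    rw [hgt, transpose_inv_recover _ (hunit t ht)]
  have hAder : ∀ l i, HasDerivAt (fun t => A t l i)
      (∑ j, v.1 j * hess (fun y => d y l) z.1 j i) 0 := by
    intro l i
    have hF : ContDiffOn ℝ 1 (fun y => jac d y l i) U := contDiffOn_fderiv_apply hU hd l i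
    have h := hasDerivAt_comp_curve hU hF hc1der hc10U
    rw [hc10] at h
    have hEq : ∀ j : Fin n, fderiv ℝ (fun y => jac d y l i) z.1 (Pi.single j 1)
        = hess (fun y => d y l) z.1 j i := fun j => fderiv_jac_entry_eq_hess hU hd hz1U l i j
    simp only [hEq] at h
    exact h
  have hgradder : ∀ i, HasDerivAt (fun t => grad H (c1 t) i)
      (∑ j, v.1 j * hess H z.1 j i) 0 := by
    intro i
    have hF : ContDiffOn ℝ 1 (fun y => grad H y i) U :=
      (contDiffOn_pi.mp (contDiffOn_grad hU hH)) i
    have h := hasDerivAt_comp_curve hU hF hc1der hc10U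
    rw [hc10] at h
    exact h
  have hgder : ∀ i, HasDerivAt (fun t => g t i) (v.2 i - ∑ j, v.1 j * hess H z.1 j i) 0 := by
    intro i
    have h2i : HasDerivAt (fun t => c2 t i) (v.2 i) 0 := hasDerivAt_pi_iff.mp hc2der i
    exact h2i.sub (hgradder i)
  have hAdiff : ∀ l i, DifferentiableAt ℝ (fun t => A t l i) 0 :=
    fun l i => (hAder l i).differentiableAt
  have hgdiff : ∀ i, DifferentiableAt ℝ (fun t => g t i) 0 :=
    fun i => (hgder i).differentiableAt
  have hMdiff : ∀ a b, DifferentiableAt ℝ (fun t => (A t * (A t)ᵀ) a b) 0 := by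
    intro a b
    have he : (fun t => (A t * (A t)ᵀ) a b) = fun t => ∑ i, A t a i * A t b i := by
      funext t; simp [Matrix.mul_apply, Matrix.transpose_apply]
    rw [he]
    exact DifferentiableAt.fun_sum (fun i _ => (hAdiff a i).mul (hAdiff b i))
  have hM0 : IsUnit (A 0 * (A 0)ᵀ) := hunit 0 h0I
  have hlamdiff : DifferentiableAt ℝ lamf 0 := by
    rw [differentiableAt_pi]
    intro l
    have he : (fun t => lamf t l)
        = fun t => ∑ l', ((A t * (A t)ᵀ)⁻¹) l l' * (∑ i, A t l' i * g t i) := by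
      funext t
      show (((A t * (A t)ᵀ)⁻¹) *ᵥ (A t *ᵥ g t)) l = _
      simp [Matrix.mulVec, dotProduct]
    rw [he]
    apply DifferentiableAt.fun_sum
    intro l' _
    exact (differentiableAt_inv_of_entries hMdiff hM0 l l').mul
      (DifferentiableAt.fun_sum (fun i _ => (hAdiff l' i).mul (hgdiff i)))
  set lam' := deriv lamf 0 with hlam'def
  have hlamder : HasDerivAt lamf lam' 0 := hlamdiff.hasDerivAt
  set lam0 := lamf 0 with hlam0def
  have hgeq : ∀ i, v.2 i - ∑ j, v.1 j * hess H z.1 j i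
      = ∑ l, ((∑ j, v.1 j * hess (fun y => d y l) z.1 j i) * lam0 l + A 0 l i * lam' l) := by
    intro i
    have hr : HasDerivAt (fun t => ((A t)ᵀ *ᵥ lamf t) i)
        (∑ l, ((∑ j, v.1 j * hess (fun y => d y l) z.1 j i) * lam0 l + A 0 l i * lam' l)) 0 := by
      have he : (fun t => ((A t)ᵀ *ᵥ lamf t) i) = fun t => ∑ l, A t l i * lamf t l := by
        funext t; simp [Matrix.mulVec, dotProduct, Matrix.transpose_apply]
      rw [he]
      apply HasDerivAt.fun_sum
      intro l _
      exact (hAder l i).mul (hasDerivAt_pi_iff.mp hlamder l)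
    have h2 : HasDerivAt (fun t => g t i)
        (∑ l, ((∑ j, v.1 j * hess (fun y => d y l) z.1 j i) * lam0 l + A 0 l i * lam' l)) 0 := by
      apply hr.congr_of_eventuallyEq
      filter_upwards [hInhds] with t ht
      rw [hgid t ht]
    exact (hgder i).unique h2
  have hA0 : A 0 = jac d z.1 := by show jac d (c1 0) = _; rw [hc10]
  have hlam0val : ∀ l, lam0 l = -(zhat H d z l) := by
    intro l
    have h0 : lam0 = ((A 0 * (A 0)ᵀ)⁻¹) *ᵥ (A 0 *ᵥ g 0) := rfl
    have hg0 : g 0 = z.2 - grad H z.1 := by show c2 0 - grad H (c1 0) = _; rw [hc20, hc10]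
    have hval : lam0 = - zhat H d z := by
      rw [h0, hg0, hA0, zhat]
      rw [show grad H z.1 - z.2 = -(z.2 - grad H z.1) from (neg_sub _ _).symm]
      rw [Matrix.mulVec_neg, Matrix.mulVec_neg, neg_neg]
    rw [hval]; rfl
  intro u hu
  have hsymH : ∀ a b, hess H z.1 a b = hess H z.1 b a :=
    fun a b => hess_symm_of_contDiffOn hU hH hz1U a b
  have hsymd : ∀ l a b, hess (fun y => d y l) z.1 a b = hess (fun y => d y l) z.1 b a :=
    fun l a b => hess_symm_of_contDiffOn hU ((contDiffOn_pi.mp hd) l) hz1U a b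
  have hv2 : ∀ i, v.2 i = (∑ j, v.1 j * hess H z.1 j i)
      + ∑ l, ((∑ j, v.1 j * hess (fun y => d y l) z.1 j i) * lam0 l + A 0 l i * lam' l) := by
    intro i; have := hgeq i; linarith
  have hMv : ∀ i, (Mmat H d z *ᵥ v.1) i = (∑ j, hess H z.1 i j * v.1 j)
      - ∑ l, zhat H d z l * (∑ j, hess (fun y => d y l) z.1 i j * v.1 j) := by
    intro i
    have e0 : (Mmat H d z *ᵥ v.1) i
        = ∑ j, (hess H z.1 i j - ∑ l, zhat H d z l * hess (fun y => d y l) z.1 i j) * v.1 j := by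
      simp [Mmat, Matrix.mulVec, dotProduct, Matrix.sub_apply, Matrix.sum_apply,
        Matrix.smul_apply, smul_eq_mul]
    rw [e0]
    calc ∑ j, (hess H z.1 i j - ∑ l, zhat H d z l * hess (fun y => d y l) z.1 i j) * v.1 j
        = ∑ j, (hess H z.1 i j * v.1 j
            - ∑ l, zhat H d z l * hess (fun y => d y l) z.1 i j * v.1 j) := by
          apply Finset.sum_congr rfl; intro j _; rw [sub_mul, Finset.sum_mul]
      _ = (∑ j, hess H z.1 i j * v.1 j)
            - ∑ j, ∑ l, zhat H d z l * hess (fun y => d y l) z.1 i j * v.1 j :=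
          Finset.sum_sub_distrib _ _
      _ = (∑ j, hess H z.1 i j * v.1 j)
            - ∑ l, zhat H d z l * (∑ j, hess (fun y => d y l) z.1 i j * v.1 j) := by
          rw [Finset.sum_comm]
          congr 1
          apply Finset.sum_congr rfl; intro l _
          rw [Finset.mul_sum]
          apply Finset.sum_congr rfl; intro j _; ring
  have hdot : (v.2 - Mmat H d z *ᵥ v.1) ⬝ᵥ u = ∑ i, (v.2 i - (Mmat H d z *ᵥ v.1) i) * u i := rfl
  rw [hdot]
  have hstep : ∀ i, (v.2 i - (Mmat H d z *ᵥ v.1) i) * u i = (∑ l, A 0 l i * lam' l) * u i := by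
    intro i
    rw [hv2 i, hMv i]
    have hq : (∑ j, v.1 j * hess H z.1 j i) = ∑ j, hess H z.1 i j * v.1 j := by
      apply Finset.sum_congr rfl; intro j _; rw [hsymH i j]; ring
    have hsum : ∑ l, ((∑ j, v.1 j * hess (fun y => d y l) z.1 j i) * lam0 l + A 0 l i * lam' l)
        = -(∑ l, zhat H d z l * (∑ j, hess (fun y => d y l) z.1 i j * v.1 j))
          + ∑ l, A 0 l i * lam' l := by
      rw [Finset.sum_add_distrib, ← Finset.sum_neg_distrib]
      congr 1
      apply Finset.sum_congr rfl; intro l _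
      have hb : (∑ j, v.1 j * hess (fun y => d y l) z.1 j i)
          = ∑ j, hess (fun y => d y l) z.1 i j * v.1 j := by
        apply Finset.sum_congr rfl; intro j _; rw [hsymd l i j]; ring
      rw [hb, hlam0val l]; ring
    rw [hq, hsum]
    ring
  have hfin : ∑ i, (v.2 i - (Mmat H d z *ᵥ v.1) i) * u i
      = ∑ i, (∑ l, A 0 l i * lam' l) * u i := Finset.sum_congr rfl (fun i _ => hstep i)
  have hzero : ∑ i, (∑ l, A 0 l i * lam' l) * u i = ∑ l, lam' l * ((jac d z.1 *ᵥ u) l) := by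
    calc ∑ i, (∑ l, A 0 l i * lam' l) * u i = ∑ i, ∑ l, A 0 l i * lam' l * u i := by
          apply Finset.sum_congr rfl; intro i _; rw [Finset.sum_mul]
      _ = ∑ l, ∑ i, A 0 l i * lam' l * u i := Finset.sum_comm
      _ = ∑ l, lam' l * ((jac d z.1 *ᵥ u) l) := by
          apply Finset.sum_congr rfl; intro l _
          rw [← hA0]
          simp only [Matrix.mulVec, dotProduct, Finset.mul_sum]
          apply Finset.sum_congr rfl; intro i _; ring
  rw [hfin, hzero, hu]
  simp

lemma Mmat_mulVec_entry {n k : ℕ} (H : (Fin n → ℝ) → ℝ) (d : (Fin n → ℝ) → (Fin k → ℝ))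
    (z : (Fin n → ℝ) × (Fin n → ℝ)) (w : Fin n → ℝ) (i : Fin n) :
    (Mmat H d z *ᵥ w) i = (∑ j, hess H z.1 i j * w j)
      - ∑ l, zhat H d z l * (∑ j, hess (fun y => d y l) z.1 i j * w j) := by
  have e0 : (Mmat H d z *ᵥ w) i
      = ∑ j, (hess H z.1 i j - ∑ l, zhat H d z l * hess (fun y => d y l) z.1 i j) * w j := by
    simp [Mmat, Matrix.mulVec, dotProduct, Matrix.sub_apply, Matrix.sum_apply,
      Matrix.smul_apply, smul_eq_mul]
  rw [e0]
  calc ∑ j, (hess H z.1 i j - ∑ l, zhat H d z l * hess (fun y => d y l) z.1 i j) * w j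
      = ∑ j, (hess H z.1 i j * w j
          - ∑ l, zhat H d z l * hess (fun y => d y l) z.1 i j * w j) := by
        apply Finset.sum_congr rfl; intro j _; rw [sub_mul, Finset.sum_mul]
    _ = (∑ j, hess H z.1 i j * w j)
          - ∑ j, ∑ l, zhat H d z l * hess (fun y => d y l) z.1 i j * w j :=
        Finset.sum_sub_distrib _ _
    _ = (∑ j, hess H z.1 i j * w j)
          - ∑ l, zhat H d z l * (∑ j, hess (fun y => d y l) z.1 i j * w j) := by
        rw [Finset.sum_comm]
        congr 1
        apply Finset.sum_congr rfl; intro l _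
        rw [Finset.mul_sum]
        apply Finset.sum_congr rfl; intro j _; ring

lemma exists_constraint_curve {n k : ℕ} {U : Set (Fin n → ℝ)} (hU : IsOpen U)
    {d : (Fin n → ℝ) → (Fin k → ℝ)} (hd : ContDiffOn ℝ 2 d U)
    {z1 : Fin n → ℝ} (hz1U : z1 ∈ U) (hdz0 : d z1 = 0)
    (hrk : Module.finrank ℝ (LinearMap.range (Matrix.mulVecLin (jac d z1))) = k)
    {v1 : Fin n → ℝ} (hv1 : jac d z1 *ᵥ v1 = 0) :
    ∃ c1 : ℝ → (Fin n → ℝ), HasDerivAt c1 v1 0 ∧ c1 0 = z1 ∧ ContDiffAt ℝ 1 c1 0 ∧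
      (∀ᶠ t in nhds (0:ℝ), d (c1 t) = 0) ∧ (∀ᶠ t in nhds (0:ℝ), c1 t ∈ U) := by
  classical
  set J : Matrix (Fin k) (Fin n) ℝ := jac d z1 with hJdef
  have hJfd : ∀ w, fderiv ℝ d z1 w = J *ᵥ w := fun w => fderiv_eq_mulVec d z1 w
  set K : Submodule ℝ (Fin n → ℝ) := LinearMap.ker (Matrix.mulVecLin J) with hK
  obtain ⟨q, hq⟩ := Submodule.exists_isCompl K
  set Pl : (Fin n → ℝ) →ₗ[ℝ] K := K.linearProjOfIsCompl q hq with hPl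
  set φ : (Fin n → ℝ) →ₗ[ℝ] (Fin k → ℝ) × K := (Matrix.mulVecLin J).prod Pl with hφ
  have hinj : Function.Injective φ := by
    rw [← LinearMap.ker_eq_bot]
    rw [Submodule.eq_bot_iff]
    intro w hw
    rw [LinearMap.mem_ker] at hw
    have h1 : Matrix.mulVecLin J w = 0 := congrArg Prod.fst hw
    have h2 : Pl w = 0 := congrArg Prod.snd hw
    have hwK : w ∈ K := LinearMap.mem_ker.mpr h1
    have h3 : Pl w = ⟨w, hwK⟩ := Submodule.linearProjOfIsCompl_apply_left hq ⟨w, hwK⟩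
    rw [h3] at h2
    exact congrArg Subtype.val h2
  have hdim : Module.finrank ℝ (Fin n → ℝ) = Module.finrank ℝ ((Fin k → ℝ) × K) := by
    have h1 := LinearMap.finrank_range_add_finrank_ker (Matrix.mulVecLin J)
    rw [hrk, ← hK, Module.finrank_fin_fun ℝ] at h1
    rw [Module.finrank_prod, Module.finrank_fin_fun, Module.finrank_fin_fun]
    omega
  have hsurj : Function.Surjective φ :=
    (LinearMap.injective_iff_surjective_of_finrank_eq_finrank hdim).mp hinj
  set eLin : (Fin n → ℝ) ≃ₗ[ℝ] ((Fin k → ℝ) × K) := LinearEquiv.ofBijective φ ⟨hinj, hsurj⟩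
    with heLin
  set e : (Fin n → ℝ) ≃L[ℝ] ((Fin k → ℝ) × K) := eLin.toContinuousLinearEquiv with he
  have hecoe : ∀ w, e w = (J *ᵥ w, Pl w) := fun w => rfl
  set Pc : (Fin n → ℝ) →L[ℝ] K := LinearMap.toContinuousLinearMap Pl with hPc
  set Φ : (Fin n → ℝ) → ((Fin k → ℝ) × K) := fun y => (d y, Pc y) with hΦ
  have hdz : DifferentiableAt ℝ d z1 :=
    (hd.contDiffAt (hU.mem_nhds hz1U)).differentiableAt (by norm_num)
  have hΦder : HasFDerivAt Φ (e : (Fin n → ℝ) →L[ℝ] ((Fin k → ℝ) × K)) z1 := by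
    have h := hdz.hasFDerivAt.prodMk Pc.hasFDerivAt
    have heq : ((fderiv ℝ d z1).prod Pc) = (e : (Fin n → ℝ) →L[ℝ] ((Fin k → ℝ) × K)) := by
      apply ContinuousLinearMap.ext
      intro w
      rw [ContinuousLinearEquiv.coe_coe, hecoe w]
      exact Prod.ext (hJfd w) rfl
    rwa [heq] at h
  have hΦcd : ContDiffAt ℝ 1 Φ z1 :=
    (((hd.contDiffAt (hU.mem_nhds hz1U)).of_le one_le_two)).prodMk Pc.contDiff.contDiffAt
  have hstrict : HasStrictFDerivAt Φ (e : (Fin n → ℝ) →L[ℝ] ((Fin k → ℝ) × K)) z1 :=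
    hΦcd.hasStrictFDerivAt' hΦder one_ne_zero
  set G : ((Fin k → ℝ) × K) → (Fin n → ℝ) := hstrict.localInverse Φ e z1 with hG
  have hGcd : ContDiffAt ℝ 1 G (Φ z1) := hΦcd.to_localInverse hΦder one_ne_zero
  have hv1K : v1 ∈ K := by
    rw [hK, LinearMap.mem_ker, Matrix.mulVecLin_apply]
    exact hv1
  set vK : K := ⟨v1, hv1K⟩ with hvK
  set p : ℝ → ((Fin k → ℝ) × K) := fun t => ((0 : Fin k → ℝ), Pc z1 + t • vK) with hp
  have hp0 : p 0 = Φ z1 := by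
    show ((0 : Fin k → ℝ), Pc z1 + (0:ℝ) • vK) = (d z1, Pc z1)
    rw [hdz0, zero_smul, add_zero]
  set c1 : ℝ → (Fin n → ℝ) := fun t => G (p t) with hc1
  have hpcd : ContDiff ℝ 1 p :=
    contDiff_const.prodMk (contDiff_const.add (contDiff_id.smul contDiff_const))
  have hc1cd : ContDiffAt ℝ 1 c1 0 := by
    have hGcd' : ContDiffAt ℝ 1 G (p 0) := hp0 ▸ hGcd
    exact hGcd'.comp 0 hpcd.contDiffAt
  have hc10 : c1 0 = z1 := by
    show G (p 0) = z1
    rw [hp0]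
    exact hstrict.localInverse_apply_image
  have hpder : HasDerivAt p ((0 : Fin k → ℝ), vK) 0 := by
    apply HasDerivAt.prodMk (hasDerivAt_const 0 _)
    have h := ((hasDerivAt_id (0:ℝ)).smul_const vK).const_add (Pc z1)
    simpa using h
  have hGder : HasFDerivAt G ((e.symm : ((Fin k → ℝ) × K) →L[ℝ] (Fin n → ℝ))) (p 0) :=
    hp0 ▸ hstrict.to_localInverse.hasFDerivAt
  have hc1der : HasDerivAt c1 v1 0 := by
    have h := hGder.comp_hasDerivAt 0 hpder
    have hev1 : e v1 = ((0 : Fin k → ℝ), vK) := by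
      rw [hecoe v1]
      refine Prod.ext hv1 ?_
      exact Submodule.linearProjOfIsCompl_apply_left hq vK
    have h2 : (e.symm : ((Fin k → ℝ) × ↥K) →L[ℝ] (Fin n → ℝ)) ((0 : Fin k → ℝ), vK) = v1 := by
      show e.symm ((0 : Fin k → ℝ), vK) = v1
      rw [← hev1, ContinuousLinearEquiv.symm_apply_apply]
    rwa [h2] at h
  have htend : Filter.Tendsto p (nhds 0) (nhds (Φ z1)) := by
    rw [← hp0]
    exact hpcd.continuous.continuousAt
  have hrinv : ∀ᶠ t in nhds (0:ℝ), Φ (c1 t) = p t :=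
    htend.eventually hstrict.eventually_right_inverse
  refine ⟨c1, hc1der, hc10, hc1cd, ?_, ?_⟩
  · filter_upwards [hrinv] with t ht
    have := congrArg Prod.fst ht
    exact this
  · have : c1 0 ∈ U := by rw [hc10]; exact hz1U
    exact hc1cd.continuousAt.preimage_mem_nhds (hU.mem_nhds (hc10 ▸ hz1U))


lemma reverse_dir {n k : ℕ} {U : Set (Fin n → ℝ)} (hU : IsOpen U)
    {H : (Fin n → ℝ) → ℝ} {d : (Fin n → ℝ) → (Fin k → ℝ)}
    (hH : ContDiffOn ℝ 2 H U) (hd : ContDiffOn ℝ 2 d U)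
    (hrank : ∀ x ∈ U, (jac d x).rank = k)
    {L : Set ((Fin n → ℝ) × (Fin n → ℝ))}
    (hL : L = {p | ∃ (x : Fin n → ℝ) (lam : Fin k → ℝ),
      x ∈ U ∧ d x = 0 ∧ p = (x, grad H x + (jac d x)ᵀ *ᵥ lam)})
    {z : (Fin n → ℝ) × (Fin n → ℝ)} (hz : z ∈ L)
    {v : (Fin n → ℝ) × (Fin n → ℝ)}
    (hv1 : jac d z.1 *ᵥ v.1 = 0)
    (hv2 : ∀ u, jac d z.1 *ᵥ u = 0 → (v.2 - Mmat H d z *ᵥ v.1) ⬝ᵥ u = 0) :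
    v ∈ TangentSet L z := by
  rw [hL] at hz
  obtain ⟨z1', lam₀', hz1U', hdz0', hzeq⟩ := hz
  have hz1U : z.1 ∈ U := by rw [hzeq]; exact hz1U'
  have hdz0 : d z.1 = 0 := by rw [hzeq]; exact hdz0'
  have hz2 : z.2 = grad H z.1 + (jac d z.1)ᵀ *ᵥ lam₀' := by rw [hzeq]
  have hunit : IsUnit (jac d z.1 * (jac d z.1)ᵀ) := isUnit_AAT _ (hrank _ hz1U)
  set lam0 : Fin k → ℝ := -zhat H d z with hlam0def
  have hlam0l : ∀ l, lam0 l = -(zhat H d z l) := fun l => rfl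
  have hsub : z.2 - grad H z.1 = (jac d z.1)ᵀ *ᵥ lam₀' := by
    rw [hz2]; rw [add_sub_cancel_left]
  have hlam0eq : lam0 = (jac d z.1 * (jac d z.1)ᵀ)⁻¹
      *ᵥ (jac d z.1 *ᵥ (z.2 - grad H z.1)) := by
    show -zhat H d z = _
    rw [zhat, show grad H z.1 - z.2 = -(z.2 - grad H z.1) from (neg_sub _ _).symm,
      Matrix.mulVec_neg, Matrix.mulVec_neg, neg_neg]
  have hlam0 : (jac d z.1)ᵀ *ᵥ lam0 = z.2 - grad H z.1 := by
    rw [hlam0eq, hsub, transpose_inv_recover _ hunit]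
  set μ : Fin k → ℝ := (jac d z.1 * (jac d z.1)ᵀ)⁻¹
      *ᵥ (jac d z.1 *ᵥ (v.2 - Mmat H d z *ᵥ v.1)) with hμdef
  have hmu : v.2 - Mmat H d z *ᵥ v.1 = (jac d z.1)ᵀ *ᵥ μ :=
    exists_transpose_mul_of_orth _ hunit _ hv2
  have hrk : Module.finrank ℝ (LinearMap.range (Matrix.mulVecLin (jac d z.1))) = k :=
    hrank z.1 hz1U
  obtain ⟨c1, hc1der, hc10, hc1cd, hev0, hevU⟩ :=
    exists_constraint_curve hU hd hz1U hdz0 hrk hv1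
  set clam : ℝ → (Fin k → ℝ) := fun t => lam0 + t • μ with hclamdef
  set c2 : ℝ → (Fin n → ℝ) :=
    fun t => grad H (c1 t) + (jac d (c1 t))ᵀ *ᵥ clam t with hc2def
  obtain ⟨sc, hscn, hsccd⟩ := hc1cd.contDiffOn le_rfl (by simp)
  have hS : sc ∩ ({t | d (c1 t) = 0} ∩ {t | c1 t ∈ U}) ∈ nhds (0:ℝ) :=
    Filter.inter_mem hscn (Filter.inter_mem hev0 hevU)
  obtain ⟨ε, hε, hball⟩ := Metric.mem_nhds_iff.mp hS
  have hIoo : Set.Ioo (-ε) ε ⊆ sc ∩ ({t | d (c1 t) = 0} ∩ {t | c1 t ∈ U}) := by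
    intro t ht
    apply hball
    rw [Real.ball_eq_Ioo]
    simpa using ht
  have hc1on : ContDiffOn ℝ 1 c1 (Set.Ioo (-ε) ε) :=
    hsccd.mono (fun t ht => (hIoo ht).1)
  have hmaps : Set.MapsTo c1 (Set.Ioo (-ε) ε) U := fun t ht => (hIoo ht).2.2
  apply mem_tangentSet_of_local ε hε (fun t => (c1 t, c2 t))
  · apply ContDiffOn.prodMk hc1on
    apply ContDiffOn.add
    · exact (contDiffOn_grad hU hH).comp hc1on hmaps
    · apply contDiffOn_pi.mpr
      intro i
      have he : (fun t => ((jac d (c1 t))ᵀ *ᵥ clam t) i)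
          = fun t => ∑ l, jac d (c1 t) l i * (lam0 l + t * μ l) := by
        funext t
        simp [Matrix.mulVec, dotProduct, Matrix.transpose_apply, hclamdef]
      rw [he]
      apply ContDiffOn.sum
      intro l _
      exact ((contDiffOn_fderiv_apply hU hd l i).comp hc1on hmaps).mul
        (contDiffOn_const.add (contDiffOn_id.mul contDiffOn_const))
  · intro t ht
    rw [hL]
    exact ⟨c1 t, clam t, (hIoo ht).2.2, (hIoo ht).2.1, rfl⟩
  · have h2 : c2 0 = z.2 := by
      show grad H (c1 0) + (jac d (c1 0))ᵀ *ᵥ clam 0 = z.2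
      rw [hc10]
      have hcl0 : clam 0 = lam0 := by
        show lam0 + (0:ℝ) • μ = lam0
        rw [zero_smul, add_zero]
      rw [hcl0, hlam0, add_sub_cancel]
    show (c1 0, c2 0) = z
    rw [hc10, h2]
  · have hc2der : HasDerivAt c2 v.2 0 := by
      rw [hasDerivAt_pi_iff]
      intro i
      have hc10U : c1 0 ∈ U := by rw [hc10]; exact hz1U
      have t1 : HasDerivAt (fun t => grad H (c1 t) i) (∑ j, v.1 j * hess H z.1 j i) 0 := by
        have hF : ContDiffOn ℝ 1 (fun y => grad H y i) U :=
          (contDiffOn_pi.mp (contDiffOn_grad hU hH)) i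
        have h := hasDerivAt_comp_curve hU hF hc1der hc10U
        rw [hc10] at h
        exact h
      have hAder : ∀ l, HasDerivAt (fun t => jac d (c1 t) l i)
          (∑ j, v.1 j * hess (fun y => d y l) z.1 j i) 0 := by
        intro l
        have hF : ContDiffOn ℝ 1 (fun y => jac d y l i) U := contDiffOn_fderiv_apply hU hd l i
        have h := hasDerivAt_comp_curve hU hF hc1der hc10U
        rw [hc10] at h
        have hEq : ∀ j : Fin n, fderiv ℝ (fun y => jac d y l i) z.1 (Pi.single j 1)
            = hess (fun y => d y l) z.1 j i := fun j => fderiv_jac_entry_eq_hess hU hd hz1U l i j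
        simp only [hEq] at h
        exact h
      have hclam : ∀ l, HasDerivAt (fun t => clam t l) (μ l) 0 := by
        intro l
        have h := ((hasDerivAt_id (0:ℝ)).mul_const (μ l)).const_add (lam0 l)
        have he : (fun t => clam t l) = fun t => lam0 l + t * μ l := by
          funext t; simp [hclamdef]
        rw [he]
        simpa using h
      have t2 : HasDerivAt (fun t => ∑ l, jac d (c1 t) l i * clam t l)
          (∑ l, ((∑ j, v.1 j * hess (fun y => d y l) z.1 j i) * lam0 l
            + jac d z.1 l i * μ l)) 0 := by
        apply HasDerivAt.fun_sum
        intro l _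
        have h := (hAder l).mul (hclam l)
        have hcl0 : clam 0 l = lam0 l := by simp [hclamdef]
        rw [hcl0, hc10] at h
        exact h
      have hfun : (fun t => c2 t i)
          = fun t => grad H (c1 t) i + ∑ l, jac d (c1 t) l i * clam t l := by
        funext t
        show (grad H (c1 t) + (jac d (c1 t))ᵀ *ᵥ clam t) i = _
        simp [Matrix.mulVec, dotProduct, Matrix.transpose_apply]
      rw [hfun]
      suffices hval : v.2 i = (∑ j, v.1 j * hess H z.1 j i)
          + ∑ l, ((∑ j, v.1 j * hess (fun y => d y l) z.1 j i) * lam0 l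
            + jac d z.1 l i * μ l) by
        rw [hval]
        exact t1.add t2
      have hsymH : ∀ a b, hess H z.1 a b = hess H z.1 b a :=
        fun a b => hess_symm_of_contDiffOn hU hH hz1U a b
      have hsymd : ∀ l a b, hess (fun y => d y l) z.1 a b = hess (fun y => d y l) z.1 b a :=
        fun l a b => hess_symm_of_contDiffOn hU ((contDiffOn_pi.mp hd) l) hz1U a b
      have hx : v.2 i - (Mmat H d z *ᵥ v.1) i = ((jac d z.1)ᵀ *ᵥ μ) i := by
        have := congrFun hmu i
        exact this
      have e1 : ∑ j, v.1 j * hess H z.1 j i = ∑ j, hess H z.1 i j * v.1 j := by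
        apply Finset.sum_congr rfl; intro j _; rw [hsymH i j]; ring
      have e2 : ∑ l, ((∑ j, v.1 j * hess (fun y => d y l) z.1 j i) * lam0 l
            + jac d z.1 l i * μ l)
          = (-(∑ l, zhat H d z l * (∑ j, hess (fun y => d y l) z.1 i j * v.1 j)))
            + ∑ l, jac d z.1 l i * μ l := by
        rw [Finset.sum_add_distrib, ← Finset.sum_neg_distrib]
        congr 1
        apply Finset.sum_congr rfl; intro l _
        have hb : (∑ j, v.1 j * hess (fun y => d y l) z.1 j i)
            = ∑ j, hess (fun y => d y l) z.1 i j * v.1 j := by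
          apply Finset.sum_congr rfl; intro j _; rw [hsymd l i j]; ring
        rw [hb, hlam0l l]; ring
      have e3 : ((jac d z.1)ᵀ *ᵥ μ) i = ∑ l, jac d z.1 l i * μ l := by
        simp [Matrix.mulVec, dotProduct, Matrix.transpose_apply]
      have e4 := Mmat_mulVec_entry H d z v.1 i
      rw [e1, e2]
      rw [e3] at hx
      rw [e4] at hx
      linarith
    have h := hc1der.prodMk hc2der
    exact h

/-- For the constrained Lagrangian submanifold
`L = {(x, ∇H(x) + d'(x)ᵀλ) : x ∈ U, d(x) = 0, λ ∈ ℝ^k}`, the tangent space at `z ∈ L` is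
`{(v₁,v₂) : d'(z₁)v₁ = 0, v₂ − M(z)v₁ ∈ (ker d'(z₁))^⊥}`. -/
theorem tangent_space_of_constrained_lagrangian {n k : ℕ}
    (U : Set (Fin n → ℝ)) (hU : IsOpen U)
    (H : (Fin n → ℝ) → ℝ) (d : (Fin n → ℝ) → (Fin k → ℝ))
    (hH : ContDiffOn ℝ 2 H U) (hd : ContDiffOn ℝ 2 d U)
    (hrank : ∀ x ∈ U, (jac d x).rank = k)
    (hne : ∃ x ∈ U, d x = 0)
    (L : Set ((Fin n → ℝ) × (Fin n → ℝ)))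
    (hL : L = {p | ∃ (x : Fin n → ℝ) (lam : Fin k → ℝ),
      x ∈ U ∧ d x = 0 ∧ p = (x, grad H x + (jac d x)ᵀ *ᵥ lam)}) :
    ∀ z ∈ L,
      TangentSet L z =
        {v : (Fin n → ℝ) × (Fin n → ℝ) |
          jac d z.1 *ᵥ v.1 = 0 ∧
          ∀ u : Fin n → ℝ, jac d z.1 *ᵥ u = 0 →
            (v.2 - Mmat H d z *ᵥ v.1) ⬝ᵥ u = 0} := by
  
  intro z hz
  ext v
  constructor
  · intro hv
    exact forward_dir hU hH hd hrank hL hv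
  · intro hv
    exact reverse_dir hU hH hd hrank hL hz hv.1 hv.2
end

section
/- For i = 1,2, let U_i ⊆ ℝ^{n_pot,i} be open and let A_i : U_i → ℝ^{ℓ_i×n_kin,i}, Z_i : U_i → ℝ^{n_pot,i×n_kin,i}, B_{c,i} : U_i → ℝ^{n_kin,i×m_c}, B_{ext,i} : U_i → ℝ^{n_kin,i×m_ext,i} be continuous and G_i : ℝ^{n_kin,i} → ℝ^{n_kin,i×n_kin,i} be continuous with G_i(Γ_i) skew-symmetric for all Γ_i. Assume that the stacked matrix A(ζ₁,ζ₂) := [A₁(ζ₁), 0; 0, A₂(ζ₂); B_{c,1}(ζ₁)ᵀ, −B_{c,2}(ζ₂)ᵀ] has constant rank on U₁ × U₂. Set n_pot := n_pot,1 + n_pot,2, n_kin := n_kin,1 + n_kin,2, m := m_ext,1 + m_ext,2, Z(ζ₁,ζ₂) := blockdiag(Z₁(ζ₁), Z₂(ζ₂)), G(Γ₁,Γ₂) := blockdiag(G₁(Γ₁), G₂(Γ₂)), B(ζ₁,ζ₂) := blockdiag(B_{ext,1}(ζ₁), B_{ext,2}(ζ₂)), and N := n_pot + 2 n_kin + m.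 For (ζ,Γ) ∈ (U₁×U₂) × ℝ^{n_kin}, let D_{(ζ,Γ)} ⊆ ℝ^N × ℝ^N be the set of all pairs of flows (ϖ_Lf, τ_Lf, ϖ_R, ϖ_ext) and efforts (τ_Le, ϖ_Le, τ_R, τ_ext) with ϖ_Lf = Z(ζ) ϖ_Le, ϖ_R = ϖ_Le, A(ζ) ϖ_Le = 0, ϖ_ext = B(ζ)ᵀ ϖ_Le, and ∃ μ with τ_Lf + Z(ζ)ᵀ τ_Le + G(Γ) ϖ_Le + τ_R + B(ζ) τ_ext + A(ζ)ᵀ μ = 0. Then (D_{(ζ,Γ)})_{(ζ,Γ) ∈ (U₁×U₂) × ℝ^{n_kin}} is a modulated Dirac structure; i.e., the power-preserving interconnection of two port-Hamiltonian multibody systems again yields a modulated Dirac structure. -/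
open Matrix

/-- A subset `D ⊆ V × V` is a Dirac structure with respect to the bilinear pairing `pair`
(between flows and efforts) if membership in `D` is equivalent to being "orthogonal" to all
of `D` with respect to `(f,e),(f̂,ê) ↦ pair f̂ e + pair f ê`. -/
def IsDiracPair {V : Type*} (pair : V → V → ℝ) (D : Set (V × V)) : Prop :=
  ∀ p : V × V, p ∈ D ↔ ∀ q ∈ D, pair q.1 p.2 + pair p.1 q.2 = 0

/-- A family `(D x)_{x ∈ U}` of subsets of `V × V` is a modulated Dirac structure if each
`D x` is a Dirac structure and around each `x ∈ U` there is a neighborhood `Ux ⊆ U` on which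
the family admits a continuous local trivialization by injective linear maps
`T y : W → V × V` (where `W ≅ ℝ^N`) with range `D y`. -/
def IsModulatedDirac (W : Type*) [AddCommGroup W] [Module ℝ W]
    {X V : Type*} [TopologicalSpace X] [TopologicalSpace V] [AddCommGroup V] [Module ℝ V]
    (pair : V → V → ℝ) (U : Set X) (D : X → Set (V × V)) : Prop :=
  (∀ x ∈ U, IsDiracPair pair (D x)) ∧
  ∀ x ∈ U, ∃ Ux : Set X, IsOpen Ux ∧ x ∈ Ux ∧ Ux ⊆ U ∧
    ∃ T : X → (W →ₗ[ℝ] V × V),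
      (∀ y ∈ Ux, Function.Injective (T y) ∧ Set.range (T y) = D y) ∧
      ∀ z : W, ContinuousOn (fun y => T y z) Ux

/-- Shape of the flow vector `(ϖ_Lf, τ_Lf, ϖ_R, ϖ_ext)` and of the effort vector
`(τ_Le, ϖ_Le, τ_R, τ_ext)` of the interconnection of two multibody systems:
`ℝ^{n_pot} × ℝ^{n_kin} × ℝ^{n_kin} × ℝ^m` with `n_pot = n_pot,1 + n_pot,2`,
`n_kin = n_kin,1 + n_kin,2`, `m = m_ext,1 + m_ext,2`. -/
abbrev FlowIC (p₁ p₂ q₁ q₂ m₁ m₂ : ℕ) : Type :=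
  ((Fin p₁ ⊕ Fin p₂) → ℝ) × ((Fin q₁ ⊕ Fin q₂) → ℝ) × ((Fin q₁ ⊕ Fin q₂) → ℝ)
    × ((Fin m₁ ⊕ Fin m₂) → ℝ)

/-- The componentwise Euclidean pairing on `ℝ^{n_pot} × ℝ^{n_kin} × ℝ^{n_kin} × ℝ^m`. -/
def pairFlowIC {p₁ p₂ q₁ q₂ m₁ m₂ : ℕ} (f e : FlowIC p₁ p₂ q₁ q₂ m₁ m₂) : ℝ :=
  f.1 ⬝ᵥ e.1 + f.2.1 ⬝ᵥ e.2.1 + f.2.2.1 ⬝ᵥ e.2.2.1 + f.2.2.2 ⬝ᵥ e.2.2.2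

/-- The stacked constraint matrix `A(ζ₁,ζ₂) = [A₁ 0; 0 A₂; B_c1ᵀ −B_c2ᵀ]` of the
interconnected system. -/
def AmatIC {q₁ q₂ l₁ l₂ mc : ℕ}
    (A₁ : Matrix (Fin l₁) (Fin q₁) ℝ) (A₂ : Matrix (Fin l₂) (Fin q₂) ℝ)
    (Bc₁ : Matrix (Fin q₁) (Fin mc) ℝ) (Bc₂ : Matrix (Fin q₂) (Fin mc) ℝ) :
    Matrix ((Fin l₁ ⊕ Fin l₂) ⊕ Fin mc) (Fin q₁ ⊕ Fin q₂) ℝ :=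
  Matrix.fromRows (Matrix.fromBlocks A₁ 0 0 A₂) (Matrix.fromCols Bc₁ᵀ (-Bc₂ᵀ))



set_option linter.unusedSectionVars false
set_option maxHeartbeats 1600000

lemma dotShift {L Q : Type*} [Fintype L] [Fintype Q] (M : Matrix L Q ℝ)
    (x : Q → ℝ) (y : L → ℝ) :
    (M *ᵥ x) ⬝ᵥ y = x ⬝ᵥ (Mᵀ *ᵥ y) := by
  rw [dotProduct_comm, dotProduct_mulVec, ← mulVec_transpose, dotProduct_comm]

section Toolkit
variable {L Q : Type*} [Fintype L] [Fintype Q] [DecidableEq Q] [DecidableEq L]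

lemma submx_mulVec {s : ℕ} (A : Matrix L Q ℝ) (e : Fin s → L) (x : Q → ℝ) :
    (A.submatrix e id) *ᵥ x = fun k => (A *ᵥ x) (e k) := by
  funext k; simp [mulVec, dotProduct, submatrix]

lemma submx_transpose_mulVec_ext {s : ℕ} (A : Matrix L Q ℝ) (e : Fin s → L) (u : Fin s → ℝ) :
    ∃ μ : L → ℝ, Aᵀ *ᵥ μ = (A.submatrix e id)ᵀ *ᵥ u := by
  refine ⟨fun i => ∑ k, if e k = i then u k else 0, ?_⟩
  funext j
  simp only [mulVec, dotProduct, transpose_apply, submatrix_apply, id]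
  simp_rw [Finset.mul_sum, mul_ite, mul_zero]
  rw [Finset.sum_comm]
  simp [Finset.sum_ite_eq' Finset.univ]

/-- The (orthogonal, given the hypotheses below) projection onto the kernel of `A`,
built from a row-selection `e`. -/
noncomputable def projK {s : ℕ} (A : Matrix L Q ℝ) (e : Fin s → L) : Matrix Q Q ℝ :=
  1 - (A.submatrix e id)ᵀ * ((A.submatrix e id) * (A.submatrix e id)ᵀ)⁻¹ * (A.submatrix e id)

section ProjFacts
variable {s : ℕ} (A : Matrix L Q ℝ) (e : Fin s → L)

/-- (b): `projK` fixes the kernel of `A` (no hypotheses needed). -/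
lemma projK_mulVec_of_ker {x : Q → ℝ} (hx : A *ᵥ x = 0) : projK A e *ᵥ x = x := by
  have h : (A.submatrix e id) *ᵥ x = 0 := by
    rw [submx_mulVec, hx]; rfl
  rw [projK, sub_mulVec, one_mulVec, ← mulVec_mulVec, ← mulVec_mulVec, h, mulVec_zero,
    mulVec_zero, sub_zero]

lemma submx_mul_projK (hdet : IsUnit ((A.submatrix e id) * (A.submatrix e id)ᵀ).det) : (A.submatrix e id) * projK A e = 0 := by
  rw [projK, Matrix.mul_sub, Matrix.mul_one, ← Matrix.mul_assoc, ← Matrix.mul_assoc,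
    Matrix.mul_nonsing_inv _ hdet, Matrix.one_mul, sub_self]

lemma projK_transpose (hdet : IsUnit ((A.submatrix e id) * (A.submatrix e id)ᵀ).det) : (projK A e)ᵀ = projK A e := by
  have hsymm : ((A.submatrix e id) * (A.submatrix e id)ᵀ)ᵀ
      = (A.submatrix e id) * (A.submatrix e id)ᵀ := by
    rw [transpose_mul, transpose_transpose]
  conv_lhs => rw [projK]
  rw [transpose_sub, transpose_one, transpose_mul, transpose_mul, transpose_transpose,
    transpose_nonsing_inv, hsymm]
  rw [projK, Matrix.mul_assoc]

/-- (d): `x - projK x` lies in the range of `Aᵀ` (no rank hypothesis needed). -/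
lemma exists_sub_projK (b : Q → ℝ) : ∃ μ : L → ℝ, Aᵀ *ᵥ μ = b - projK A e *ᵥ b := by
  obtain ⟨μ, hμ⟩ := submx_transpose_mulVec_ext A e
    (((((A.submatrix e id) * (A.submatrix e id)ᵀ)⁻¹) * (A.submatrix e id)) *ᵥ b)
  refine ⟨μ, ?_⟩
  rw [hμ, projK, sub_mulVec, one_mulVec, mulVec_mulVec, sub_sub_cancel, Matrix.mul_assoc]

variable (hdet : IsUnit ((A.submatrix e id) * (A.submatrix e id)ᵀ).det)
variable (hrank : A.rank = s)

include hdet hrank in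
/-- Kernel of the selected-rows submatrix is contained in the kernel of `A`
(uses full rank of the selection plus the rank hypothesis). -/
lemma ker_submx_le {x : Q → ℝ} (hx : (A.submatrix e id) *ᵥ x = 0) : A *ᵥ x = 0 := by
  set B := A.submatrix e id with hB
  have hrankB : B.rank = s := by
    have h1 : (B * Bᵀ).rank = B.rank := Matrix.rank_self_mul_transpose B
    have h2 : (B * Bᵀ).rank = s := by
      rw [Matrix.rank_of_isUnit _ ((Matrix.isUnit_iff_isUnit_det _).mpr hdet), Fintype.card_fin]
    omega
  -- kernels
  have hle : LinearMap.ker A.mulVecLin ≤ LinearMap.ker B.mulVecLin := by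
    intro v hv
    simp only [LinearMap.mem_ker, mulVecLin_apply] at hv ⊢
    rw [hB, submx_mulVec, hv]; rfl
  have hfin : Module.finrank ℝ (LinearMap.ker B.mulVecLin)
      ≤ Module.finrank ℝ (LinearMap.ker A.mulVecLin) := by
    have h1 := LinearMap.finrank_range_add_finrank_ker A.mulVecLin
    have h2 := LinearMap.finrank_range_add_finrank_ker B.mulVecLin
    have hra : Module.finrank ℝ (LinearMap.range A.mulVecLin) = s := hrank
    have hrb : Module.finrank ℝ (LinearMap.range B.mulVecLin) = s := hrankB
    rw [Module.finrank_pi] at h1 h2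
    omega
  have : LinearMap.ker A.mulVecLin = LinearMap.ker B.mulVecLin :=
    Submodule.eq_of_le_of_finrank_le hle hfin
  have hx' : x ∈ LinearMap.ker B.mulVecLin := by
    simpa [LinearMap.mem_ker, mulVecLin_apply] using hx
  rw [← this] at hx'
  simpa [LinearMap.mem_ker, mulVecLin_apply] using hx'

include hdet hrank in
/-- (a): `projK` maps into the kernel of `A`. -/
lemma mulVec_projK (x : Q → ℝ) : A *ᵥ (projK A e *ᵥ x) = 0 := by
  apply ker_submx_le A e hdet hrank
  rw [mulVec_mulVec, submx_mul_projK A e hdet, zero_mulVec]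

include hdet hrank in
lemma mul_projK : A * projK A e = 0 := by
  ext i j
  have h := mulVec_projK A e hdet hrank (Pi.single j 1)
  rw [mulVec_mulVec] at h
  have := congrFun h i
  simpa [mulVec_single] using this

include hdet hrank in
lemma projK_mulVec_transpose (μ : L → ℝ) : projK A e *ᵥ (Aᵀ *ᵥ μ) = 0 := by
  have h : projK A e * Aᵀ = 0 := by
    have := congrArg Matrix.transpose (mul_projK A e hdet hrank)
    rwa [transpose_mul, projK_transpose A e hdet, transpose_zero] at this
  rw [mulVec_mulVec, h, zero_mulVec]

include hdet hrank in
/-- (c): anything orthogonal to the kernel of `A` is in the range of `Aᵀ`. -/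
lemma exists_of_orth {w : Q → ℝ} (hw : ∀ v, A *ᵥ v = 0 → w ⬝ᵥ v = 0) :
    ∃ μ : L → ℝ, Aᵀ *ᵥ μ = w := by
  set v := projK A e *ᵥ w with hv
  have hker : A *ᵥ v = 0 := mulVec_projK A e hdet hrank w
  have hvv : v ⬝ᵥ v = 0 := by
    calc v ⬝ᵥ v = (projK A e *ᵥ w) ⬝ᵥ v := rfl
    _ = w ⬝ᵥ ((projK A e)ᵀ *ᵥ v) := dotShift _ _ _
    _ = w ⬝ᵥ (projK A e *ᵥ v) := by rw [projK_transpose A e hdet]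
    _ = w ⬝ᵥ v := by rw [projK_mulVec_of_ker A e hker]
    _ = 0 := hw v hker
  have hv0 : v = 0 := by
    rwa [dotProduct_self_eq_zero] at hvv
  obtain ⟨μ, hμ⟩ := exists_sub_projK A e w
  exact ⟨μ, by rw [hμ, ← hv, hv0, sub_zero]⟩

end ProjFacts

/-- Existence of a good row selection at a point. -/
lemma exists_good_rows (A : Matrix L Q ℝ) :
    ∃ e : Fin (A.rank) → L,
      IsUnit ((A.submatrix e id) * (A.submatrix e id)ᵀ).det := by
  classical
  obtain ⟨b, hbsub, hbspan, hbli⟩ := exists_linearIndependent ℝ (Set.range A)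
  have hbfin : b.Finite := Set.Finite.subset (Set.finite_range A) hbsub
  haveI : Fintype b := hbfin.fintype
  have hcard : b.toFinset.card = A.rank := by
    rw [A.rank_eq_finrank_span_row, show Set.range A.row = Set.range A from rfl, ← hbspan, finrank_span_set_eq_card hbli]
  -- enumerate b
  have hcard' : Fintype.card b = A.rank := by
    rwa [Set.toFinset_card] at hcard
  let ε : Fin A.rank ≃ b := (Fintype.equivFinOfCardEq hcard').symm
  choose f hf using fun x : b => hbsub x.2
  refine ⟨fun k => f (ε k), ?_⟩
  set B := A.submatrix (fun k => f (ε k)) id with hB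
  have hrows : ∀ k, B k = (ε k : Q → ℝ) := by
    intro k; funext j; simp [hB, submatrix, hf (ε k)]
  have hli : LinearIndependent ℝ B := by
    have : B = (fun x : b => (x : Q → ℝ)) ∘ ε := by
      funext k; exact hrows k
    rw [this]
    exact hbli.comp ε ε.injective
  -- invertibility of the Gram matrix
  have hdet : (B * Bᵀ).det ≠ 0 := by
    intro h0
    obtain ⟨v, hv0, hv⟩ := (Matrix.exists_mulVec_eq_zero_iff).mpr h0
    have hBt : Bᵀ *ᵥ v = ∑ k, v k • B k := by
      funext j
      simp [mulVec, dotProduct, transpose_apply, Finset.sum_apply, mul_comm]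
    have hz : (Bᵀ *ᵥ v) ⬝ᵥ (Bᵀ *ᵥ v) = 0 := by
      have h1 : (Bᵀ *ᵥ v) ⬝ᵥ (Bᵀ *ᵥ v) = v ⬝ᵥ ((B * Bᵀ) *ᵥ v) := by
        rw [dotShift Bᵀ v (Bᵀ *ᵥ v), transpose_transpose, mulVec_mulVec]
      rw [h1, hv, dotProduct_zero]
    rw [dotProduct_self_eq_zero] at hz
    rw [hBt] at hz
    have := (Fintype.linearIndependent_iff.mp hli) v hz
    exact hv0 (funext this)
  exact isUnit_iff_ne_zero.mpr hdet

end Toolkit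


section DiracGeneric
variable {L P Q M : Type*} [Fintype L] [Fintype P] [Fintype Q] [Fintype M]
  [DecidableEq Q] [DecidableEq L]

variable (P Q M) in
/-- The generic componentwise pairing. -/
def pairV (f e : (P → ℝ) × (Q → ℝ) × (Q → ℝ) × (M → ℝ)) : ℝ :=
  f.1 ⬝ᵥ e.1 + f.2.1 ⬝ᵥ e.2.1 + f.2.2.1 ⬝ᵥ e.2.2.1 + f.2.2.2 ⬝ᵥ e.2.2.2

/-- The generic Dirac structure candidate determined by matrices `Z`, `G`, `B`, `A`. -/
def DsetG (Z : Matrix P Q ℝ) (G : Matrix Q Q ℝ) (B : Matrix Q M ℝ) (A : Matrix L Q ℝ) :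
    Set (((P → ℝ) × (Q → ℝ) × (Q → ℝ) × (M → ℝ)) × ((P → ℝ) × (Q → ℝ) × (Q → ℝ) × (M → ℝ))) :=
  {x | x.1.1 = Z *ᵥ x.2.2.1 ∧
       x.1.2.2.1 = x.2.2.1 ∧
       A *ᵥ x.2.2.1 = 0 ∧
       x.1.2.2.2 = Bᵀ *ᵥ x.2.2.1 ∧
       ∃ μ : L → ℝ,
         x.1.2.1 + Zᵀ *ᵥ x.2.1 + G *ᵥ x.2.2.1 + x.2.2.2.1 + B *ᵥ x.2.2.2.2 + Aᵀ *ᵥ μ = 0}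

lemma exists_of_orth' (A : Matrix L Q ℝ) {w : Q → ℝ}
    (hw : ∀ v, A *ᵥ v = 0 → w ⬝ᵥ v = 0) : ∃ μ : L → ℝ, Aᵀ *ᵥ μ = w := by
  obtain ⟨e, hdet⟩ := exists_good_rows A
  exact exists_of_orth A e hdet rfl hw

lemma sub_dot_eq_zero {n : Type*} [Fintype n] {f g : n → ℝ}
    (h : f ⬝ᵥ (f - g) - g ⬝ᵥ (f - g) = 0) : f = g := by
  have h2 : (f - g) ⬝ᵥ (f - g) = 0 := by rw [sub_dotProduct]; linarith
  rw [dotProduct_self_eq_zero, sub_eq_zero] at h2; exact h2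

theorem isDiracPair_DsetG (Z : Matrix P Q ℝ) (G : Matrix Q Q ℝ) (B : Matrix Q M ℝ)
    (A : Matrix L Q ℝ) (hG : Gᵀ = -G) :
    IsDiracPair (pairV P Q M) (DsetG Z G B A) := by
  intro p
  constructor
  · rintro ⟨hp1, hp3, hpA, hp4, μ, hpμ⟩ q ⟨hq1, hq3, hqA, hq4, ν, hqν⟩
    have e1 := congrArg (· ⬝ᵥ q.2.2.1) hpμ
    have e2 := congrArg (· ⬝ᵥ p.2.2.1) hqν
    simp only [add_dotProduct, zero_dotProduct] at e1 e2
    have b1 : (Z *ᵥ q.2.2.1) ⬝ᵥ p.2.1 = (Zᵀ *ᵥ p.2.1) ⬝ᵥ q.2.2.1 := by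
      rw [dotShift, dotProduct_comm]
    have b2 : (Z *ᵥ p.2.2.1) ⬝ᵥ q.2.1 = (Zᵀ *ᵥ q.2.1) ⬝ᵥ p.2.2.1 := by
      rw [dotShift, dotProduct_comm]
    have b3 : (G *ᵥ q.2.2.1) ⬝ᵥ p.2.2.1 + (G *ᵥ p.2.2.1) ⬝ᵥ q.2.2.1 = 0 := by
      rw [dotShift, hG, neg_mulVec, dotProduct_neg, dotProduct_comm]; ring
    have b4 : q.2.2.1 ⬝ᵥ p.2.2.2.1 = p.2.2.2.1 ⬝ᵥ q.2.2.1 := dotProduct_comm _ _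
    have b5 : p.2.2.1 ⬝ᵥ q.2.2.2.1 = q.2.2.2.1 ⬝ᵥ p.2.2.1 := dotProduct_comm _ _
    have b6 : (Bᵀ *ᵥ q.2.2.1) ⬝ᵥ p.2.2.2.2 = (B *ᵥ p.2.2.2.2) ⬝ᵥ q.2.2.1 := by
      rw [dotShift, transpose_transpose, dotProduct_comm]
    have b7 : (Bᵀ *ᵥ p.2.2.1) ⬝ᵥ q.2.2.2.2 = (B *ᵥ q.2.2.2.2) ⬝ᵥ p.2.2.1 := by
      rw [dotShift, transpose_transpose, dotProduct_comm]
    have b8 : (Aᵀ *ᵥ μ) ⬝ᵥ q.2.2.1 = 0 := by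
      rw [dotShift, transpose_transpose, hqA, dotProduct_zero]
    have b9 : (Aᵀ *ᵥ ν) ⬝ᵥ p.2.2.1 = 0 := by
      rw [dotShift, transpose_transpose, hpA, dotProduct_zero]
    simp only [pairV]
    rw [hp1, hq1, hp3, hq3, hp4, hq4]
    linarith [e1, e2, b1, b2, b3, b4, b5, b6, b7, b8, b9]
  · intro h
    obtain ⟨⟨f1, f2, f3, f4⟩, e1, e2, e3, e4⟩ := p
    -- recover f1 = Z e2
    have h1 : f1 = Z *ᵥ e2 := by
      set t := f1 - Z *ᵥ e2 with ht
      have hq := h ((0, -(Zᵀ *ᵥ t), 0, 0), (t, 0, 0, 0))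
        ⟨by simp, by simp, by simp, by simp, ⟨0, by simp⟩⟩
      simp only [pairV, zero_dotProduct, dotProduct_zero, neg_dotProduct, add_zero, zero_add] at hq
      have hb : (Zᵀ *ᵥ t) ⬝ᵥ e2 = (Z *ᵥ e2) ⬝ᵥ t := by
        rw [dotShift, transpose_transpose, dotProduct_comm]
      exact sub_dot_eq_zero (by rw [← ht]; linarith [hq, hb])
    -- recover f3 = e2
    have h3 : f3 = e2 := by
      set t := f3 - e2 with ht
      have hq := h ((0, -t, 0, 0), (0, 0, t, 0))
        ⟨by simp, by simp, by simp, by simp, ⟨0, by simp⟩⟩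
      simp only [pairV, zero_dotProduct, dotProduct_zero, neg_dotProduct, add_zero, zero_add] at hq
      have hb : t ⬝ᵥ e2 = e2 ⬝ᵥ t := dotProduct_comm _ _
      exact sub_dot_eq_zero (by rw [← ht]; linarith [hq, hb])
    -- recover f4 = Bᵀ e2
    have h4 : f4 = Bᵀ *ᵥ e2 := by
      set t := f4 - Bᵀ *ᵥ e2 with ht
      have hq := h ((0, -(B *ᵥ t), 0, 0), (0, 0, 0, t))
        ⟨by simp, by simp, by simp, by simp, ⟨0, by simp⟩⟩
      simp only [pairV, zero_dotProduct, dotProduct_zero, neg_dotProduct, add_zero, zero_add] at hq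
      have hb : (B *ᵥ t) ⬝ᵥ e2 = (Bᵀ *ᵥ e2) ⬝ᵥ t := by
        rw [dotShift, dotProduct_comm]
      exact sub_dot_eq_zero (by rw [← ht]; linarith [hq, hb])
    -- recover A e2 = 0
    have hA2 : A *ᵥ e2 = 0 := by
      set t := A *ᵥ e2 with ht
      have hq := h ((0, -(Aᵀ *ᵥ t), 0, 0), (0, 0, 0, 0))
        ⟨by simp, by simp, by simp, by simp, ⟨t, by simp⟩⟩
      simp only [pairV, zero_dotProduct, dotProduct_zero, neg_dotProduct, add_zero, zero_add] at hq
      have hb : (Aᵀ *ᵥ t) ⬝ᵥ e2 = t ⬝ᵥ t := by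
        rw [dotShift, transpose_transpose, ← ht]
      rw [← dotProduct_self_eq_zero (v := t)]
      linarith [hq, hb]
    -- recover the Lagrange-multiplier condition
    refine ⟨h1, h3, hA2, h4, ?_⟩
    have horth : ∀ v, A *ᵥ v = 0 →
        (f2 + Zᵀ *ᵥ e1 + G *ᵥ e2 + e3 + B *ᵥ e4) ⬝ᵥ v = 0 := by
      intro v hv
      have hq := h ((Z *ᵥ v, -(G *ᵥ v), v, Bᵀ *ᵥ v), (0, v, 0, 0))
        ⟨rfl, rfl, hv, rfl, ⟨0, by simp⟩⟩
      simp only [pairV, zero_dotProduct, dotProduct_zero, neg_dotProduct, add_zero,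
        zero_add] at hq
      have c1 : (Z *ᵥ v) ⬝ᵥ e1 = (Zᵀ *ᵥ e1) ⬝ᵥ v := by rw [dotShift, dotProduct_comm]
      have c2 : (G *ᵥ v) ⬝ᵥ e2 = -((G *ᵥ e2) ⬝ᵥ v) := by
        rw [dotShift, hG, neg_mulVec, dotProduct_neg, dotProduct_comm]
      have c3 : v ⬝ᵥ e3 = e3 ⬝ᵥ v := dotProduct_comm _ _
      have c4 : (Bᵀ *ᵥ v) ⬝ᵥ e4 = (B *ᵥ e4) ⬝ᵥ v := by
        rw [dotShift, transpose_transpose, dotProduct_comm]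
      simp only [add_dotProduct]
      linarith [hq, c1, c2, c3, c4]
    obtain ⟨μ, hμ⟩ := exists_of_orth' A horth
    refine ⟨-μ, ?_⟩
    rw [mulVec_neg, hμ]
    abel

end DiracGeneric

section TrivGeneric
variable {L P Q M : Type*} [Fintype L] [Fintype P] [Fintype Q] [Fintype M]
  [DecidableEq Q] [DecidableEq L]

/-- The local trivialization linear map. -/
noncomputable def Tlin (Z : Matrix P Q ℝ) (G : Matrix Q Q ℝ) (B : Matrix Q M ℝ)
    (Pi : Matrix Q Q ℝ) :
    ((P → ℝ) × (Q → ℝ) × (Q → ℝ) × (M → ℝ)) →ₗ[ℝ]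
      ((P → ℝ) × (Q → ℝ) × (Q → ℝ) × (M → ℝ)) × ((P → ℝ) × (Q → ℝ) × (Q → ℝ) × (M → ℝ)) where
  toFun z :=
    ((Z *ᵥ (Pi *ᵥ z.2.1),
      (z.2.1 - Pi *ᵥ z.2.1) - (Zᵀ *ᵥ z.1 + G *ᵥ (Pi *ᵥ z.2.1) + z.2.2.1 + B *ᵥ z.2.2.2),
      Pi *ᵥ z.2.1,
      Bᵀ *ᵥ (Pi *ᵥ z.2.1)),
     (z.1, Pi *ᵥ z.2.1, z.2.2.1, z.2.2.2))
  map_add' x y := by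
    simp only [Prod.fst_add, Prod.snd_add, Pi.add_apply, mulVec_add, Prod.mk_add_mk,
      Prod.mk.injEq]
    and_intros <;> first | rfl | trivial | abel
  map_smul' r x := by
    simp only [Prod.smul_fst, Prod.smul_snd, mulVec_smul, Prod.smul_mk, RingHom.id_apply,
      Prod.mk.injEq, smul_sub, smul_add]

lemma Tlin_injective (Z : Matrix P Q ℝ) (G : Matrix Q Q ℝ) (B : Matrix Q M ℝ)
    (Pi : Matrix Q Q ℝ) : Function.Injective (Tlin Z G B Pi) := by
  rw [← LinearMap.ker_eq_bot, LinearMap.ker_eq_bot']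
  rintro ⟨a, b, c, d⟩ hz
  simp only [Tlin, LinearMap.coe_mk, AddHom.coe_mk, Prod.mk_eq_zero] at hz
  obtain ⟨⟨h1, h2, h3, h4⟩, h5, h6, h7, h8⟩ := hz
  have hb : b = 0 := by
    have := h2
    rw [h5, h6, h7, h8] at this
    simpa using this
  simp [Prod.mk_eq_zero, h5, h7, h8, hb]

lemma range_Tlin (Z : Matrix P Q ℝ) (G : Matrix Q Q ℝ) (B : Matrix Q M ℝ)
    (A : Matrix L Q ℝ) {s : ℕ} (e : Fin s → L)
    (hdet : IsUnit ((A.submatrix e id) * (A.submatrix e id)ᵀ).det) (hrank : A.rank = s) :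
    Set.range (Tlin Z G B (projK A e)) = DsetG Z G B A := by
  ext x
  constructor
  · rintro ⟨⟨a, b, c, d⟩, rfl⟩
    refine ⟨rfl, rfl, mulVec_projK A e hdet hrank b, rfl, ?_⟩
    obtain ⟨μ, hμ⟩ := exists_sub_projK A e b
    refine ⟨-μ, ?_⟩
    simp only [Tlin, LinearMap.coe_mk, AddHom.coe_mk]
    rw [mulVec_neg, hμ]
    abel
  · obtain ⟨⟨f1, f2, f3, f4⟩, e1, e2, e3, e4⟩ := x
    rintro ⟨h1, h3, hA, h4, μ, hμ⟩
    simp only at h1 h3 hA h4 hμ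
    refine ⟨(e1, e2 - Aᵀ *ᵥ μ, e3, e4), ?_⟩
    have hPi : projK A e *ᵥ (e2 - Aᵀ *ᵥ μ) = e2 := by
      rw [mulVec_sub, projK_mulVec_of_ker A e hA, projK_mulVec_transpose A e hdet hrank,
        sub_zero]
    have hf2 : f2 = -(Zᵀ *ᵥ e1 + (G *ᵥ e2 + (e3 + (B *ᵥ e4 + Aᵀ *ᵥ μ)))) := by
      rw [add_assoc, add_assoc, add_assoc, add_assoc] at hμ
      exact eq_neg_of_add_eq_zero_left hμ
    simp only [Tlin, LinearMap.coe_mk, AddHom.coe_mk, hPi, Prod.mk.injEq]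
    and_intros <;>
      first
      | rfl
      | trivial
      | exact h1.symm
      | exact h3.symm
      | exact h4.symm
      | (rw [hf2]; abel)

lemma contOn_entry {X I J : Type*} [TopologicalSpace X] {f : X → Matrix I J ℝ} {S : Set X}
    (h : ContinuousOn f S) (i : I) (j : J) : ContinuousOn (fun x => f x i j) S := by
  have hg : Continuous fun m : Matrix I J ℝ => m i j :=
    (continuous_apply j).comp (continuous_apply i)
  exact hg.comp_continuousOn h

lemma contOn_matrix {X I J : Type*} [TopologicalSpace X] {f : X → Matrix I J ℝ} {S : Set X}
    (h : ∀ i j, ContinuousOn (fun x => f x i j) S) : ContinuousOn f S :=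
  continuousOn_pi.2 fun i => continuousOn_pi.2 fun j => h i j

lemma contOn_fromBlocks {X : Type*} {I₁ I₂ J₁ J₂ : Type*} [TopologicalSpace X] {S : Set X}
    {f : X → Matrix I₁ J₁ ℝ} {g : X → Matrix I₂ J₂ ℝ}
    (hf : ContinuousOn f S) (hg : ContinuousOn g S) :
    ContinuousOn (fun x => Matrix.fromBlocks (f x) 0 0 (g x)) S := by
  apply contOn_matrix
  rintro (i | i) (j | j) <;>
    simp only [fromBlocks_apply₁₁, fromBlocks_apply₁₂, fromBlocks_apply₂₁,
      fromBlocks_apply₂₂, Matrix.zero_apply]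
  exacts [contOn_entry hf i j, continuousOn_const, continuousOn_const, contOn_entry hg i j]

theorem triv_main {X : Type*} [TopologicalSpace X] {S : Set X} (hS : IsOpen S)
    (𝒜 : X → Matrix L Q ℝ) (𝒵 : X → Matrix P Q ℝ) (𝒢 : X → Matrix Q Q ℝ) (ℬ : X → Matrix Q M ℝ)
    (h𝒜 : ContinuousOn 𝒜 S) (h𝒵 : ContinuousOn 𝒵 S) (h𝒢 : ContinuousOn 𝒢 S)
    (hℬ : ContinuousOn ℬ S) {ρ : ℕ} (hrk : ∀ y ∈ S, (𝒜 y).rank = ρ) {x : X} (hx : x ∈ S) :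
    ∃ Ux : Set X, IsOpen Ux ∧ x ∈ Ux ∧ Ux ⊆ S ∧
      ∃ T : X → (((P → ℝ) × (Q → ℝ) × (Q → ℝ) × (M → ℝ)) →ₗ[ℝ]
          ((P → ℝ) × (Q → ℝ) × (Q → ℝ) × (M → ℝ)) × ((P → ℝ) × (Q → ℝ) × (Q → ℝ) × (M → ℝ))),
        (∀ y ∈ Ux, Function.Injective (T y) ∧
          Set.range (T y) = DsetG (𝒵 y) (𝒢 y) (ℬ y) (𝒜 y)) ∧
        ∀ z, ContinuousOn (fun y => T y z) Ux := by
  have hρ : ρ = (𝒜 x).rank := (hrk x hx).symm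
  subst hρ
  obtain ⟨e, hdet⟩ := exists_good_rows (𝒜 x)
  set g : X → ℝ :=
    fun y => ((((𝒜 y).submatrix e id)) * (((𝒜 y).submatrix e id))ᵀ).det with hgdef
  have hg : ContinuousOn g S := by
    rw [continuousOn_iff_continuous_restrict] at h𝒜 ⊢
    exact ((h𝒜.matrix_submatrix e id).matrix_mul
      (h𝒜.matrix_submatrix e id).matrix_transpose).matrix_det
  set Ux : Set X := S ∩ g ⁻¹' {(0:ℝ)}ᶜ with hUxdef
  have hUxopen : IsOpen Ux := hg.isOpen_inter_preimage hS isOpen_compl_singleton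
  have hUxsub : Ux ⊆ S := Set.inter_subset_left
  have hdet' : ∀ y ∈ Ux, IsUnit ((((𝒜 y).submatrix e id))
      * (((𝒜 y).submatrix e id))ᵀ).det := by
    intro y hy
    exact isUnit_iff_ne_zero.mpr hy.2
  refine ⟨Ux, hUxopen, ⟨hx, hdet.ne_zero⟩, hUxsub, ?_⟩
  refine ⟨fun y => Tlin (𝒵 y) (𝒢 y) (ℬ y) (projK (𝒜 y) e), fun y hy => ?_, ?_⟩
  · exact ⟨Tlin_injective _ _ _ _,
      range_Tlin _ _ _ _ e (hdet' y hy) (hrk y (hUxsub hy))⟩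
  · intro z
    rw [continuousOn_iff_continuous_restrict]
    have hA' : Continuous fun y : Ux => 𝒜 y :=
      continuousOn_iff_continuous_restrict.mp (h𝒜.mono hUxsub)
    have hZ' : Continuous fun y : Ux => 𝒵 y :=
      continuousOn_iff_continuous_restrict.mp (h𝒵.mono hUxsub)
    have hG' : Continuous fun y : Ux => 𝒢 y :=
      continuousOn_iff_continuous_restrict.mp (h𝒢.mono hUxsub)
    have hB' : Continuous fun y : Ux => ℬ y :=
      continuousOn_iff_continuous_restrict.mp (hℬ.mono hUxsub)
    have hsub' : Continuous fun y : Ux => (𝒜 y).submatrix e id := hA'.matrix_submatrix e id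
    have hgram : Continuous fun y : Ux =>
        ((𝒜 y).submatrix e id) * ((𝒜 y).submatrix e id)ᵀ :=
      hsub'.matrix_mul hsub'.matrix_transpose
    have hinv : Continuous fun y : Ux =>
        (((𝒜 y).submatrix e id) * ((𝒜 y).submatrix e id)ᵀ)⁻¹ := by
      have heq : (fun y : Ux => (((𝒜 y).submatrix e id) * ((𝒜 y).submatrix e id)ᵀ)⁻¹)
          = fun y : Ux => (g y)⁻¹ •
              (((𝒜 y).submatrix e id) * ((𝒜 y).submatrix e id)ᵀ).adjugate := by
        funext y
        rw [Matrix.inv_def, Ring.inverse_eq_inv]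
      rw [heq]
      have hgc : Continuous fun y : Ux => g y :=
        continuousOn_iff_continuous_restrict.mp (hg.mono hUxsub)
      exact (hgc.inv₀ fun y => y.2.2).smul hgram.matrix_adjugate
    have hPi : Continuous fun y : Ux => projK (𝒜 y) e := by
      unfold projK
      exact continuous_const.sub
        ((hsub'.matrix_transpose.matrix_mul hinv).matrix_mul hsub')
    have hPib : Continuous fun y : Ux => projK (𝒜 y) e *ᵥ z.2.1 :=
      hPi.matrix_mulVec continuous_const
    show Continuous fun y : Ux =>
      ((𝒵 y *ᵥ (projK (𝒜 y) e *ᵥ z.2.1),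
        (z.2.1 - projK (𝒜 y) e *ᵥ z.2.1) -
          ((𝒵 y)ᵀ *ᵥ z.1 + 𝒢 y *ᵥ (projK (𝒜 y) e *ᵥ z.2.1) + z.2.2.1 + ℬ y *ᵥ z.2.2.2),
        projK (𝒜 y) e *ᵥ z.2.1,
        (ℬ y)ᵀ *ᵥ (projK (𝒜 y) e *ᵥ z.2.1)),
       (z.1, projK (𝒜 y) e *ᵥ z.2.1, z.2.2.1, z.2.2.2))
    refine Continuous.prodMk ?_ ?_
    · refine Continuous.prodMk (hZ'.matrix_mulVec hPib) ?_
      refine Continuous.prodMk ?_ ?_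
      · exact (continuous_const.sub hPib).sub
          (((hZ'.matrix_transpose.matrix_mulVec continuous_const).add
            (hG'.matrix_mulVec hPib)).add continuous_const |>.add
            (hB'.matrix_mulVec continuous_const))
      · exact Continuous.prodMk hPib (hB'.matrix_transpose.matrix_mulVec hPib)
    · exact Continuous.prodMk continuous_const
        (Continuous.prodMk hPib (Continuous.prodMk continuous_const continuous_const))

end TrivGeneric

/-- The power-preserving interconnection of two port-Hamiltonian multibody systems again
yields a modulated Dirac structure: under the constant-rank assumption on the stacked
constraint matrix, the family of Dirac structures of the interconnected system with
block-diagonal `Z`, `G`, `B` and stacked constraint matrix `A`, modulated by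
`(ζ,Γ) ∈ (U₁ × U₂) × ℝ^{n_kin}`, is a modulated Dirac structure. -/
theorem interconnection_isModulatedDirac
    {p₁ p₂ q₁ q₂ l₁ l₂ mc m₁ m₂ : ℕ}
    (U₁ : Set (Fin p₁ → ℝ)) (U₂ : Set (Fin p₂ → ℝ))
    (hU₁ : IsOpen U₁) (hU₂ : IsOpen U₂)
    (A₁ : (Fin p₁ → ℝ) → Matrix (Fin l₁) (Fin q₁) ℝ)
    (A₂ : (Fin p₂ → ℝ) → Matrix (Fin l₂) (Fin q₂) ℝ)
    (Z₁ : (Fin p₁ → ℝ) → Matrix (Fin p₁) (Fin q₁) ℝ)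
    (Z₂ : (Fin p₂ → ℝ) → Matrix (Fin p₂) (Fin q₂) ℝ)
    (Bc₁ : (Fin p₁ → ℝ) → Matrix (Fin q₁) (Fin mc) ℝ)
    (Bc₂ : (Fin p₂ → ℝ) → Matrix (Fin q₂) (Fin mc) ℝ)
    (Bext₁ : (Fin p₁ → ℝ) → Matrix (Fin q₁) (Fin m₁) ℝ)
    (Bext₂ : (Fin p₂ → ℝ) → Matrix (Fin q₂) (Fin m₂) ℝ)
    (G₁ : (Fin q₁ → ℝ) → Matrix (Fin q₁) (Fin q₁) ℝ)
    (G₂ : (Fin q₂ → ℝ) → Matrix (Fin q₂) (Fin q₂) ℝ)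
    (hA₁ : ContinuousOn A₁ U₁) (hA₂ : ContinuousOn A₂ U₂)
    (hZ₁ : ContinuousOn Z₁ U₁) (hZ₂ : ContinuousOn Z₂ U₂)
    (hBc₁ : ContinuousOn Bc₁ U₁) (hBc₂ : ContinuousOn Bc₂ U₂)
    (hBext₁ : ContinuousOn Bext₁ U₁) (hBext₂ : ContinuousOn Bext₂ U₂)
    (hG₁ : Continuous G₁) (hG₂ : Continuous G₂)
    (hskew₁ : ∀ Γ₁ : Fin q₁ → ℝ, (G₁ Γ₁)ᵀ = -(G₁ Γ₁))
    (hskew₂ : ∀ Γ₂ : Fin q₂ → ℝ, (G₂ Γ₂)ᵀ = -(G₂ Γ₂))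
    (hrank : ∃ ρ : ℕ, ∀ ζ₁ ∈ U₁, ∀ ζ₂ ∈ U₂,
      (AmatIC (A₁ ζ₁) (A₂ ζ₂) (Bc₁ ζ₁) (Bc₂ ζ₂)).rank = ρ) :
    IsModulatedDirac (FlowIC p₁ p₂ q₁ q₂ m₁ m₂) pairFlowIC
      ((U₁ ×ˢ U₂) ×ˢ (Set.univ : Set ((Fin q₁ → ℝ) × (Fin q₂ → ℝ))))
      (fun ζΓ =>
        {x : FlowIC p₁ p₂ q₁ q₂ m₁ m₂ × FlowIC p₁ p₂ q₁ q₂ m₁ m₂ |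
          x.1.1 = Matrix.fromBlocks (Z₁ ζΓ.1.1) 0 0 (Z₂ ζΓ.1.2) *ᵥ x.2.2.1 ∧
          x.1.2.2.1 = x.2.2.1 ∧
          AmatIC (A₁ ζΓ.1.1) (A₂ ζΓ.1.2) (Bc₁ ζΓ.1.1) (Bc₂ ζΓ.1.2) *ᵥ x.2.2.1 = 0 ∧
          x.1.2.2.2 = (Matrix.fromBlocks (Bext₁ ζΓ.1.1) 0 0 (Bext₂ ζΓ.1.2))ᵀ *ᵥ x.2.2.1 ∧
          ∃ μ : ((Fin l₁ ⊕ Fin l₂) ⊕ Fin mc) → ℝ,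
            x.1.2.1 + (Matrix.fromBlocks (Z₁ ζΓ.1.1) 0 0 (Z₂ ζΓ.1.2))ᵀ *ᵥ x.2.1
              + Matrix.fromBlocks (G₁ ζΓ.2.1) 0 0 (G₂ ζΓ.2.2) *ᵥ x.2.2.1
              + x.2.2.2.1
              + Matrix.fromBlocks (Bext₁ ζΓ.1.1) 0 0 (Bext₂ ζΓ.1.2) *ᵥ x.2.2.2.2
              + (AmatIC (A₁ ζΓ.1.1) (A₂ ζΓ.1.2) (Bc₁ ζΓ.1.1) (Bc₂ ζΓ.1.2))ᵀ *ᵥ μ = 0}) := by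
  classical
  obtain ⟨ρ, hρ⟩ := hrank
  constructor
  · rintro ⟨⟨ζ₁, ζ₂⟩, Γ₁, Γ₂⟩ -
    have hGskew : (Matrix.fromBlocks (G₁ Γ₁) 0 0 (G₂ Γ₂))ᵀ
        = -(Matrix.fromBlocks (G₁ Γ₁) 0 0 (G₂ Γ₂)) := by
      rw [fromBlocks_transpose, transpose_zero, hskew₁, hskew₂, Matrix.fromBlocks_neg]
      simp
    exact isDiracPair_DsetG (Matrix.fromBlocks (Z₁ ζ₁) 0 0 (Z₂ ζ₂))
      (Matrix.fromBlocks (G₁ Γ₁) 0 0 (G₂ Γ₂))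
      (Matrix.fromBlocks (Bext₁ ζ₁) 0 0 (Bext₂ ζ₂))
      (AmatIC (A₁ ζ₁) (A₂ ζ₂) (Bc₁ ζ₁) (Bc₂ ζ₂)) hGskew
  · intro x hx
    have hSopen : IsOpen ((U₁ ×ˢ U₂) ×ˢ (Set.univ : Set ((Fin q₁ → ℝ) × (Fin q₂ → ℝ)))) :=
      (hU₁.prod hU₂).prod isOpen_univ
    set S := (U₁ ×ˢ U₂) ×ˢ (Set.univ : Set ((Fin q₁ → ℝ) × (Fin q₂ → ℝ))) with hSdef
    have hA₁' : ContinuousOn (fun y : ((Fin p₁ → ℝ) × (Fin p₂ → ℝ)) ×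
        ((Fin q₁ → ℝ) × (Fin q₂ → ℝ)) => A₁ y.1.1) S :=
      hA₁.comp (continuous_fst.comp continuous_fst).continuousOn fun y hy => hy.1.1
    have hA₂' : ContinuousOn (fun y : ((Fin p₁ → ℝ) × (Fin p₂ → ℝ)) ×
        ((Fin q₁ → ℝ) × (Fin q₂ → ℝ)) => A₂ y.1.2) S :=
      hA₂.comp (continuous_snd.comp continuous_fst).continuousOn fun y hy => hy.1.2
    have hZ₁' : ContinuousOn (fun y : ((Fin p₁ → ℝ) × (Fin p₂ → ℝ)) ×
        ((Fin q₁ → ℝ) × (Fin q₂ → ℝ)) => Z₁ y.1.1) S :=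
      hZ₁.comp (continuous_fst.comp continuous_fst).continuousOn fun y hy => hy.1.1
    have hZ₂' : ContinuousOn (fun y : ((Fin p₁ → ℝ) × (Fin p₂ → ℝ)) ×
        ((Fin q₁ → ℝ) × (Fin q₂ → ℝ)) => Z₂ y.1.2) S :=
      hZ₂.comp (continuous_snd.comp continuous_fst).continuousOn fun y hy => hy.1.2
    have hBc₁' : ContinuousOn (fun y : ((Fin p₁ → ℝ) × (Fin p₂ → ℝ)) ×
        ((Fin q₁ → ℝ) × (Fin q₂ → ℝ)) => Bc₁ y.1.1) S :=
      hBc₁.comp (continuous_fst.comp continuous_fst).continuousOn fun y hy => hy.1.1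
    have hBc₂' : ContinuousOn (fun y : ((Fin p₁ → ℝ) × (Fin p₂ → ℝ)) ×
        ((Fin q₁ → ℝ) × (Fin q₂ → ℝ)) => Bc₂ y.1.2) S :=
      hBc₂.comp (continuous_snd.comp continuous_fst).continuousOn fun y hy => hy.1.2
    have hBe₁' : ContinuousOn (fun y : ((Fin p₁ → ℝ) × (Fin p₂ → ℝ)) ×
        ((Fin q₁ → ℝ) × (Fin q₂ → ℝ)) => Bext₁ y.1.1) S :=
      hBext₁.comp (continuous_fst.comp continuous_fst).continuousOn fun y hy => hy.1.1
    have hBe₂' : ContinuousOn (fun y : ((Fin p₁ → ℝ) × (Fin p₂ → ℝ)) ×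
        ((Fin q₁ → ℝ) × (Fin q₂ → ℝ)) => Bext₂ y.1.2) S :=
      hBext₂.comp (continuous_snd.comp continuous_fst).continuousOn fun y hy => hy.1.2
    have hG₁' : ContinuousOn (fun y : ((Fin p₁ → ℝ) × (Fin p₂ → ℝ)) ×
        ((Fin q₁ → ℝ) × (Fin q₂ → ℝ)) => G₁ y.2.1) S :=
      (hG₁.comp (continuous_fst.comp continuous_snd)).continuousOn
    have hG₂' : ContinuousOn (fun y : ((Fin p₁ → ℝ) × (Fin p₂ → ℝ)) ×
        ((Fin q₁ → ℝ) × (Fin q₂ → ℝ)) => G₂ y.2.2) S :=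
      (hG₂.comp (continuous_snd.comp continuous_snd)).continuousOn
    have h𝒜 : ContinuousOn (fun y : ((Fin p₁ → ℝ) × (Fin p₂ → ℝ)) ×
        ((Fin q₁ → ℝ) × (Fin q₂ → ℝ)) =>
        AmatIC (A₁ y.1.1) (A₂ y.1.2) (Bc₁ y.1.1) (Bc₂ y.1.2)) S := by
      apply contOn_matrix
      intro i j
      rcases i with i | i
      · rcases i with i | i <;> rcases j with j | j <;>
          simp only [AmatIC, fromRows_apply_inl, fromBlocks_apply₁₁, fromBlocks_apply₁₂,
            fromBlocks_apply₂₁, fromBlocks_apply₂₂, Matrix.zero_apply]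
        exacts [contOn_entry hA₁' i j, continuousOn_const, continuousOn_const,
          contOn_entry hA₂' i j]
      · rcases j with j | j <;>
          simp only [AmatIC, fromRows_apply_inr, fromCols_apply_inl, fromCols_apply_inr,
            transpose_apply, Matrix.neg_apply]
        exacts [contOn_entry hBc₁' j i, (contOn_entry hBc₂' j i).neg]
    have h𝒵 := contOn_fromBlocks hZ₁' hZ₂'
    have h𝒢 := contOn_fromBlocks hG₁' hG₂'
    have hℬ := contOn_fromBlocks hBe₁' hBe₂'
    have hrk : ∀ y ∈ S, (AmatIC (A₁ y.1.1) (A₂ y.1.2) (Bc₁ y.1.1) (Bc₂ y.1.2)).rank = ρ :=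
      fun y hy => hρ y.1.1 hy.1.1 y.1.2 hy.1.2
    exact triv_main hSopen
      (fun y => AmatIC (A₁ y.1.1) (A₂ y.1.2) (Bc₁ y.1.1) (Bc₂ y.1.2))
      (fun y => Matrix.fromBlocks (Z₁ y.1.1) 0 0 (Z₂ y.1.2))
      (fun y => Matrix.fromBlocks (G₁ y.2.1) 0 0 (G₂ y.2.2))
      (fun y => Matrix.fromBlocks (Bext₁ y.1.1) 0 0 (Bext₂ y.1.2))
      h𝒜 h𝒵 h𝒢 hℬ hrk hx
end
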